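/- arXiv:0911.3352 — 4 statements merged into one kernel-verified Lean document; each statement's English description precedes it below -/
import Mathlib

section
/- For a set of n points lying on a convex arc spanned by one edge of a bounding triangle (so that the relevant region is a convex polygon with n+2 vertices), the probability that a fixed interior point has degree 3 in a uniformly random triangulation equals C_{n-1}/C_n = (n+1)/(2(2n-1)) = 1/4 + O(1/n), hence the expected number of degree-3 vertices is n/4 + O(1). -/
/-- `d` is a diagonal of the convex polygon with vertices `0, 1, …, n-1`
(listed in cyclic order): an unordered pair, normalized as `d.1 < d.2`, of
non-adjacent vertices. -/
def IsDiag (n : ℕ) (d : ℕ × ℕ) : Prop :=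
  d.1 + 1 < d.2 ∧ d.2 < n ∧ ¬(d.1 = 0 ∧ d.2 = n - 1)

/-- Two diagonals of a convex polygon *cross* (meet in an interior point)
exactly when their endpoints interleave in the cyclic order. -/
def Crosses (d e : ℕ × ℕ) : Prop :=
  (d.1 < e.1 ∧ e.1 < d.2 ∧ d.2 < e.2) ∨ (e.1 < d.1 ∧ d.1 < e.2 ∧ e.2 < d.2)

/-- A *triangulation* of the convex polygon with `n` vertices: a maximal set
of pairwise non-crossing diagonals. -/
def IsPolygonTriangulation (n : ℕ) (D : Finset (ℕ × ℕ)) : Prop :=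
  (∀ d ∈ D, IsDiag n d) ∧ (∀ d ∈ D, ∀ e ∈ D, ¬ Crosses d e) ∧
    ∀ d : ℕ × ℕ, IsDiag n d → (∀ e ∈ D, ¬ Crosses d e) → d ∈ D

attribute [local instance] Classical.propDecidable

namespace Stmt10

open Finset

noncomputable def tris (m : ℕ) : Finset (Finset (ℕ × ℕ)) :=
  ((Finset.range m ×ˢ Finset.range m).powerset).filter (IsPolygonTriangulation m)

lemma mem_tris {m : ℕ} {D : Finset (ℕ × ℕ)} :
    D ∈ tris m ↔ IsPolygonTriangulation m D := by
  constructor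
  · exact fun h => (Finset.mem_filter.1 h).2
  · intro h
    refine Finset.mem_filter.2 ⟨Finset.mem_powerset.2 fun d hd => ?_, h⟩
    have := h.1 d hd
    simp only [IsDiag] at this
    simp only [Finset.mem_product, Finset.mem_range]
    omega

lemma not_isDiag_small {m : ℕ} (hm : m ≤ 3) (d : ℕ × ℕ) : ¬ IsDiag m d := by
  simp only [IsDiag]; omega

lemma tris_small {m : ℕ} (hm : m ≤ 3) : tris m = {∅} := by
  ext D
  simp only [mem_tris, Finset.mem_singleton]
  constructor
  · intro h
    ext d
    simp only [Finset.notMem_empty, iff_false]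
    exact fun hd => not_isDiag_small hm d (h.1 d hd)
  · rintro rfl
    exact ⟨fun d hd => absurd hd (Finset.notMem_empty d),
      fun d hd => absurd hd (Finset.notMem_empty d),
      fun d hd _ => absurd (hd) (not_isDiag_small hm d)⟩

def sh (c : ℕ) (d : ℕ × ℕ) : ℕ × ℕ := (d.1 + c, d.2 + c)

noncomputable def glue (m c : ℕ) (p : Finset (ℕ × ℕ) × Finset (ℕ × ℕ)) :
    Finset (ℕ × ℕ) :=
  p.1 ∪ p.2.image (sh c) ∪ (if 2 ≤ c then {((0:ℕ), c)} else ∅) ∪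
    (if c + 1 < m - 1 then {(c, m - 1)} else ∅)

lemma mem_glue {m c : ℕ} {p : Finset (ℕ × ℕ) × Finset (ℕ × ℕ)} {d : ℕ × ℕ} :
    d ∈ glue m c p ↔ d ∈ p.1 ∨ (∃ e ∈ p.2, sh c e = d) ∨ (2 ≤ c ∧ d = (0, c)) ∨
      (c + 1 < m - 1 ∧ d = (c, m - 1)) := by
  unfold glue
  split_ifs with h1 h2 h2 <;>
    simp [Finset.mem_union, Finset.mem_image, h1, h2, or_comm, or_left_comm] <;> tauto

lemma glue_mem_tris {m c : ℕ} (hc1 : 1 ≤ c) (hc2 : c + 2 ≤ m)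
    {p : Finset (ℕ × ℕ) × Finset (ℕ × ℕ)}
    (h1 : p.1 ∈ tris (c + 1)) (h2 : p.2 ∈ tris (m - c)) : glue m c p ∈ tris m := by
  obtain ⟨hdiag1, hnc1, hmax1⟩ := mem_tris.1 h1
  obtain ⟨hdiag2, hnc2, hmax2⟩ := mem_tris.1 h2
  rw [mem_tris]
  refine ⟨?_, ?_, ?_⟩
  · -- all diagonals
    intro d hd
    rcases mem_glue.1 hd with h | ⟨e, he, rfl⟩ | ⟨hcc, rfl⟩ | ⟨hcc, rfl⟩
    · have := hdiag1 d h; simp only [IsDiag] at this ⊢; omega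
    · have := hdiag2 e he; simp only [IsDiag, sh] at this ⊢; omega
    · simp only [IsDiag]; omega
    · simp only [IsDiag]; omega
  · -- pairwise non-crossing
    intro d hd e he
    rcases mem_glue.1 hd with h | ⟨a, ha, rfl⟩ | ⟨h2c, rfl⟩ | ⟨hcm, rfl⟩ <;>
      rcases mem_glue.1 he with h' | ⟨b, hb, rfl⟩ | ⟨h2c', rfl⟩ | ⟨hcm', rfl⟩
    · exact hnc1 d h e h'
    · have := hdiag1 d h; have := hdiag2 b hb
      simp only [IsDiag, sh, Crosses] at *; omega
    · have := hdiag1 d h; simp only [IsDiag, Crosses] at *; omega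
    · have := hdiag1 d h; simp only [IsDiag, Crosses] at *; omega
    · have := hdiag1 e h'; have := hdiag2 a ha
      simp only [IsDiag, sh, Crosses] at *; omega
    · intro hcr
      exact hnc2 a ha b hb (by revert hcr; simp only [Crosses, sh]; omega)
    · have := hdiag2 a ha; simp only [IsDiag, sh, Crosses] at *; omega
    · have := hdiag2 a ha; simp only [IsDiag, sh, Crosses] at *; omega
    · have := hdiag1 e h'; simp only [IsDiag, Crosses] at *; omega
    · have := hdiag2 b hb; simp only [IsDiag, sh, Crosses] at *; omega
    · simp only [Crosses]; omega
    · simp only [Crosses]; omega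
    · have := hdiag1 e h'; simp only [IsDiag, Crosses] at *; omega
    · have := hdiag2 b hb; simp only [IsDiag, sh, Crosses] at *; omega
    · simp only [Crosses]; omega
    · simp only [Crosses]; omega
  · -- maximality
    intro d hdg hnc
    have hdg' := hdg
    simp only [IsDiag] at hdg'
    by_cases hd2 : d.2 ≤ c
    · by_cases h0c : d = (0, c)
      · exact mem_glue.2 (Or.inr (Or.inr (Or.inl ⟨by subst h0c; omega, h0c⟩)))
      · refine mem_glue.2 (Or.inl (hmax1 d ?_ ?_))
        · exact ⟨hdg'.1, by omega, fun hh => h0c (Prod.ext hh.1 (by have := hh.2; omega))⟩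
        · exact fun e he => hnc e (mem_glue.2 (Or.inl he))
    · by_cases hd1c : c ≤ d.1
      · by_cases hcm : d = (c, m - 1)
        · refine mem_glue.2 (Or.inr (Or.inr (Or.inr ⟨?_, hcm⟩)))
          subst hcm; omega
        · have hd_eq : sh c (d.1 - c, d.2 - c) = d := by
            simp only [sh]; ext <;> simp <;> omega
          refine mem_glue.2 (Or.inr (Or.inl ⟨(d.1 - c, d.2 - c), hmax2 _ ?_ ?_, hd_eq⟩))
          · exact ⟨by simp; omega, by simp; omega, fun hh => hcm (Prod.ext
              (by have := hh.1; simp only at this; omega)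
              (by have := hh.2; simp only at this; omega))⟩
          · intro b hb hcr
            refine hnc (sh c b) (mem_glue.2 (Or.inr (Or.inl ⟨b, hb, rfl⟩))) ?_
            revert hcr; simp only [Crosses, sh]; omega
      · exfalso
        by_cases h0 : d.1 = 0
        · refine hnc (c, m - 1) (mem_glue.2 (Or.inr (Or.inr (Or.inr ⟨by omega, rfl⟩))))
            (Or.inl ⟨by omega, by omega, by omega⟩)
        · refine hnc (0, c) (mem_glue.2 (Or.inr (Or.inr (Or.inl ⟨by omega, rfl⟩))))
            (Or.inr ⟨by omega, by omega, by omega⟩)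

def ush (c : ℕ) (d : ℕ × ℕ) : ℕ × ℕ := (d.1 - c, d.2 - c)

lemma sh_ush {c : ℕ} {d : ℕ × ℕ} (h1 : c ≤ d.1) (h2 : c ≤ d.2) :
    sh c (ush c d) = d := by
  obtain ⟨a, b⟩ := d
  simp only [sh, ush, Prod.mk.injEq] at *
  omega

lemma ush_sh {c : ℕ} {e : ℕ × ℕ} : ush c (sh c e) = e := by
  obtain ⟨a, b⟩ := e
  simp only [sh, ush, Prod.mk.injEq]
  omega

noncomputable def part1 (c : ℕ) (D : Finset (ℕ × ℕ)) : Finset (ℕ × ℕ) :=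
  D.filter fun d => d.2 ≤ c ∧ d ≠ (0, c)

noncomputable def part2 (m c : ℕ) (D : Finset (ℕ × ℕ)) : Finset (ℕ × ℕ) :=
  (D.filter fun d => c ≤ d.1 ∧ c ≤ d.2 ∧ d ≠ (c, m - 1)).image (ush c)

lemma mem_part2 {m c : ℕ} {D : Finset (ℕ × ℕ)} {e : ℕ × ℕ} :
    e ∈ part2 m c D ↔ sh c e ∈ D ∧ sh c e ≠ (c, m - 1) := by
  simp only [part2, Finset.mem_image, Finset.mem_filter]
  constructor
  · rintro ⟨d, ⟨hd, hcd, hcd2, hne⟩, rfl⟩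
    rw [sh_ush hcd hcd2]; exact ⟨hd, hne⟩
  · rintro ⟨hd, hne⟩
    refine ⟨sh c e, ⟨hd, by simp [sh], by simp [sh], hne⟩, ush_sh⟩

lemma decomp {m : ℕ} (hm : 3 ≤ m) {D : Finset (ℕ × ℕ)} (hD : D ∈ tris m) :
    ∃ c, 1 ≤ c ∧ c + 2 ≤ m ∧ part1 c D ∈ tris (c + 1) ∧
      part2 m c D ∈ tris (m - c) ∧ glue m c (part1 c D, part2 m c D) = D ∧
      (∀ j, 2 ≤ j → (0, j) ∈ D → j ≤ c) ∧ (2 ≤ c → (0, c) ∈ D) := by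
  obtain ⟨hdiag, hnc, hmax⟩ := mem_tris.1 hD
  have hne : (insert 1 ((Finset.range m).filter fun j => ((0 : ℕ), j) ∈ D)).Nonempty :=
    ⟨1, Finset.mem_insert_self _ _⟩
  obtain ⟨c, hceq⟩ : ∃ c, c = (insert 1 ((Finset.range m).filter
      fun j => ((0 : ℕ), j) ∈ D)).max' hne := ⟨_, rfl⟩
  have hcS : c ∈ insert 1 ((Finset.range m).filter fun j => ((0 : ℕ), j) ∈ D) :=
    hceq ▸ Finset.max'_mem _ hne
  have hcp : c = 1 ∨ (0, c) ∈ D := by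
    rcases Finset.mem_insert.1 hcS with h | h
    · exact Or.inl h
    · exact Or.inr (Finset.mem_filter.1 h).2
  have hc1 : 1 ≤ c := by
    rcases hcp with h | h
    · omega
    · have := hdiag _ h; simp only [IsDiag, true_and] at this; omega
  have hc2 : c + 2 ≤ m := by
    rcases hcp with h | h
    · omega
    · have := hdiag _ h; simp only [IsDiag, true_and] at this; omega
  have hmaxc : ∀ j, (0, j) ∈ D → j ≤ c := by
    intro j hj
    have := hdiag _ hj; simp only [IsDiag] at this
    have : j ∈ insert 1 ((Finset.range m).filter fun j => ((0 : ℕ), j) ∈ D) :=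
      Finset.mem_insert_of_mem (Finset.mem_filter.2 ⟨Finset.mem_range.2 (by omega), hj⟩)
    rw [hceq]
    exact Finset.le_max' _ j this
  have hc0D : 2 ≤ c → (0, c) ∈ D := by
    intro h2; rcases hcp with h | h
    · omega
    · exact h
  -- the right chord is present when it is a diagonal
  have hcr : c + 1 < m - 1 → (c, m - 1) ∈ D := by
    intro h
    have hdg : IsDiag m (c, m - 1) := by
      simp only [IsDiag]; omega
    apply hmax _ hdg
    intro e he hcross
    have hed := hdiag e he; simp only [IsDiag] at hed
    rcases hcross with ⟨h1, h2, h3⟩ | ⟨h1, h2, h3⟩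
    · omega
    · skip
      by_cases h0 : e.1 = 0
      · have : (0, e.2) ∈ D := by rwa [← h0, Prod.mk.eta]
        have := hmaxc _ this; omega
      · have hc0 : (0, c) ∈ D := hc0D (by omega)
        exact hnc e he _ hc0 (Or.inr (by simp only; omega))
  -- no diagonal of D straddles c
  have hstr : ∀ d ∈ D, d.2 ≤ c ∨ c ≤ d.1 := by
    intro d hd
    by_contra hcon
    push_neg at hcon
    have hdd := hdiag d hd; simp only [IsDiag] at hdd
    by_cases h0 : d.1 = 0
    · have : (0, d.2) ∈ D := by rwa [← h0, Prod.mk.eta]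
      have := hmaxc _ this; omega
    · have hc0 : (0, c) ∈ D := hc0D (by omega)
      exact hnc d hd _ hc0 (Or.inr (by simp only; omega))
  refine ⟨c, hc1, hc2, ?_, ?_, ?_, fun j h2 hj => hmaxc j hj, hc0D⟩
  · -- part1 is a triangulation of the (c+1)-gon
    rw [mem_tris]
    refine ⟨?_, ?_, ?_⟩
    · intro d hd
      obtain ⟨hdD, hd2, hne0⟩ := Finset.mem_filter.1 hd
      have := hdiag d hdD
      simp only [IsDiag, Prod.ext_iff, true_and, ne_eq] at this hne0 ⊢
      omega
    · intro d hd e he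
      exact hnc d (Finset.mem_filter.1 hd).1 e (Finset.mem_filter.1 he).1
    · intro d hdg hncd
      have hdg' := hdg; simp only [IsDiag] at hdg'
      have hdD : d ∈ D := by
        have : IsDiag m d := by simp only [IsDiag]; omega
        apply hmax d this
        intro e he
        rcases hstr e he with h | h
        · by_cases h0c : e = (0, c)
          · subst h0c
            simp only [Crosses]; omega
          · exact hncd e (Finset.mem_filter.2 ⟨he, h, h0c⟩)
        · simp only [Crosses]; omega
      refine Finset.mem_filter.2 ⟨hdD, by omega, ?_⟩
      simp only [ne_eq, Prod.ext_iff]; omega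
  · -- part2 is a triangulation of the (m-c)-gon
    rw [mem_tris]
    refine ⟨?_, ?_, ?_⟩
    · intro e he
      obtain ⟨hd, hne⟩ := mem_part2.1 he
      have := hdiag _ hd
      simp only [IsDiag, sh, ne_eq, Prod.ext_iff] at this hne ⊢
      omega
    · intro d hd e he hcross
      obtain ⟨hd1, -⟩ := mem_part2.1 hd
      obtain ⟨he1, -⟩ := mem_part2.1 he
      exact hnc _ hd1 _ he1 (by revert hcross; simp only [Crosses, sh]; omega)
    · intro e heg hnce
      have heg' := heg; simp only [IsDiag] at heg'
      have hdD : sh c e ∈ D := by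
        have : IsDiag m (sh c e) := by
          simp only [IsDiag, sh, Prod.ext_iff]; omega
        apply hmax _ this
        intro f hf
        have hfd := hdiag f hf; simp only [IsDiag] at hfd
        rcases hstr f hf with h | h
        · simp only [Crosses, sh]; omega
        · by_cases hfc : f = (c, m - 1)
          · subst hfc
            simp only [Crosses, sh] at hfd ⊢; omega
          · have hf2 : ush c f ∈ part2 m c D := by
              rw [mem_part2, sh_ush h (by omega)]
              exact ⟨hf, hfc⟩
            intro hcross
            apply hnce _ hf2
            revert hcross; simp only [Crosses, sh, ush]; omega
      rw [mem_part2]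
      refine ⟨hdD, ?_⟩
      simp only [sh, ne_eq, Prod.ext_iff] at heg' ⊢; omega
  · -- gluing the parts recovers D
    ext d
    rw [mem_glue]
    constructor
    · rintro (h | ⟨e, he, rfl⟩ | ⟨h2, rfl⟩ | ⟨h2, rfl⟩)
      · exact (Finset.mem_filter.1 h).1
      · exact (mem_part2.1 he).1
      · exact hc0D h2
      · exact hcr h2
    · intro hd
      have hdd := hdiag d hd; simp only [IsDiag] at hdd
      rcases hstr d hd with h | h
      · by_cases h0c : d = (0, c)
        · refine Or.inr (Or.inr (Or.inl ⟨?_, h0c⟩))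
          subst h0c; omega
        · exact Or.inl (Finset.mem_filter.2 ⟨hd, h, h0c⟩)
      · by_cases hcm : d = (c, m - 1)
        · refine Or.inr (Or.inr (Or.inr ⟨?_, hcm⟩))
          subst hcm; omega
        · refine Or.inr (Or.inl ⟨ush c d, ?_, sh_ush h (by omega)⟩)
          rw [mem_part2, sh_ush h (by omega)]
          exact ⟨hd, hcm⟩

lemma part1_glue {m c : ℕ} (hc1 : 1 ≤ c) (hc2 : c + 2 ≤ m)
    {p : Finset (ℕ × ℕ) × Finset (ℕ × ℕ)}
    (h1 : p.1 ∈ tris (c + 1)) (h2 : p.2 ∈ tris (m - c)) :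
    part1 c (glue m c p) = p.1 := by
  have hd1 := (mem_tris.1 h1).1
  have hd2 := (mem_tris.1 h2).1
  ext d
  simp only [part1, Finset.mem_filter]
  constructor
  · rintro ⟨hg, hdc, hne⟩
    rcases mem_glue.1 hg with h | ⟨e, he, rfl⟩ | ⟨h2c, rfl⟩ | ⟨h2c, rfl⟩
    · exact h
    · have := hd2 e he; simp only [IsDiag, sh] at this hdc; omega
    · exact absurd rfl hne
    · simp only at hdc; omega
  · intro hd
    have := hd1 d hd
    simp only [IsDiag, ne_eq, Prod.ext_iff, true_and] at this ⊢
    exact ⟨mem_glue.2 (Or.inl hd), by omega, by omega⟩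

lemma part2_glue {m c : ℕ} (hc1 : 1 ≤ c) (hc2 : c + 2 ≤ m)
    {p : Finset (ℕ × ℕ) × Finset (ℕ × ℕ)}
    (h1 : p.1 ∈ tris (c + 1)) (h2 : p.2 ∈ tris (m - c)) :
    part2 m c (glue m c p) = p.2 := by
  have hd1 := (mem_tris.1 h1).1
  have hd2 := (mem_tris.1 h2).1
  ext e
  rw [mem_part2]
  constructor
  · rintro ⟨hg, hne⟩
    rcases mem_glue.1 hg with h | ⟨f, hf, hfe⟩ | ⟨h2c, hee⟩ | ⟨h2c, hee⟩
    · have := hd1 _ h; simp only [IsDiag, sh] at this; omega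
    · have : f = e := by
        obtain ⟨a, b⟩ := f; obtain ⟨a', b'⟩ := e
        simp only [sh, Prod.mk.injEq] at hfe ⊢; omega
      rwa [← this]
    · simp only [sh, Prod.ext_iff] at hee; omega
    · exact absurd hee hne
  · intro he
    have := hd2 e he
    simp only [IsDiag, ne_eq, sh, Prod.ext_iff, true_and] at this ⊢
    exact ⟨mem_glue.2 (Or.inr (Or.inl ⟨e, he, rfl⟩)), by omega⟩

lemma apex_eq {m c c' : ℕ} (hc1 : 1 ≤ c) (hc2 : c + 2 ≤ m) (hc1' : 1 ≤ c')
    (hc2' : c' + 2 ≤ m) {p q : Finset (ℕ × ℕ) × Finset (ℕ × ℕ)}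
    (h1 : p.1 ∈ tris (c + 1)) (h2 : p.2 ∈ tris (m - c))
    (h1' : q.1 ∈ tris (c' + 1)) (h2' : q.2 ∈ tris (m - c'))
    (heq : glue m c p = glue m c' q) : c = c' := by
  by_contra hne
  -- wlog c < c'
  suffices H : ∀ c c' : ℕ, 1 ≤ c → c < c' → c' + 2 ≤ m →
      ∀ p q : Finset (ℕ × ℕ) × Finset (ℕ × ℕ), p.1 ∈ tris (c + 1) →
      glue m c p = glue m c' q → False by
    rcases Nat.lt_or_ge c c' with h | h
    · exact H c c' hc1 h hc2' p q h1 heq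
    · exact H c' c hc1' (by omega) hc2 q p h1' heq.symm
  intro c c' hc1 hlt hc2' p q h1 heq
  have hmem : ((0 : ℕ), c') ∈ glue m c' q :=
    mem_glue.2 (Or.inr (Or.inr (Or.inl ⟨by omega, rfl⟩)))
  rw [← heq] at hmem
  rcases mem_glue.1 hmem with h | ⟨e, he, hee⟩ | ⟨h2c, hee⟩ | ⟨h2c, hee⟩
  · have := (mem_tris.1 h1).1 _ h; simp only [IsDiag] at this; omega
  · simp only [sh, Prod.ext_iff] at hee; omega
  · simp only [Prod.ext_iff] at hee; omega
  · simp only [Prod.ext_iff] at hee; omega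

lemma tris_eq_biUnion {m : ℕ} (hm : 3 ≤ m) :
    tris m = (Finset.Icc 1 (m - 2)).biUnion
      (fun c => ((tris (c + 1)) ×ˢ (tris (m - c))).image (glue m c)) := by
  ext D
  simp only [Finset.mem_biUnion, Finset.mem_image, Finset.mem_product, Finset.mem_Icc]
  constructor
  · intro hD
    obtain ⟨c, hc1, hc2, hp1, hp2, hglue, -, -⟩ := decomp hm hD
    exact ⟨c, ⟨hc1, by omega⟩, (part1 c D, part2 m c D), ⟨hp1, hp2⟩, hglue⟩
  · rintro ⟨c, ⟨hc1, hc2⟩, p, ⟨hp1, hp2⟩, rfl⟩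
    exact glue_mem_tris hc1 (by omega) hp1 hp2

lemma card_tris_rec {m : ℕ} (hm : 3 ≤ m) :
    (tris m).card = ∑ c ∈ Finset.Icc 1 (m - 2),
      (tris (c + 1)).card * (tris (m - c)).card := by
  rw [tris_eq_biUnion hm]
  rw [Finset.card_biUnion]
  · refine Finset.sum_congr rfl fun c hc => ?_
    obtain ⟨hc1, hc2⟩ := Finset.mem_Icc.1 hc
    rw [Finset.card_image_of_injOn, Finset.card_product]
    intro p hp q hq hpq
    simp only [Finset.mem_coe, Finset.mem_product] at hp hq
    have e1 : p.1 = q.1 := by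
      rw [← part1_glue hc1 (by omega) hp.1 hp.2, ← part1_glue hc1 (by omega) hq.1 hq.2, hpq]
    have e2 : p.2 = q.2 := by
      rw [← part2_glue hc1 (by omega) hp.1 hp.2, ← part2_glue hc1 (by omega) hq.1 hq.2, hpq]
    exact Prod.ext e1 e2
  · intro c hc c' hc' hne
    obtain ⟨hc1, hc2⟩ := Finset.mem_Icc.1 hc
    obtain ⟨hc1', hc2'⟩ := Finset.mem_Icc.1 hc'
    rw [Function.onFun, Finset.disjoint_left]
    rintro D hD hD'
    simp only [Finset.mem_image, Finset.mem_product] at hD hD'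
    obtain ⟨p, ⟨hp1, hp2⟩, hpD⟩ := hD
    obtain ⟨q, ⟨hq1, hq2⟩, hqD⟩ := hD'
    exact hne (apex_eq hc1 (by omega) hc1' (by omega) hp1 hp2 hq1 hq2 (by rw [hpD, hqD]))

theorem card_tris : ∀ n : ℕ, (tris (n + 2)).card = catalan n := by
  intro n
  induction n using Nat.strong_induction_on with
  | _ n ih =>
    match n with
    | 0 => rw [tris_small (by omega)]; simp
    | Nat.succ k =>
      rw [card_tris_rec (by omega)]
      have hk2 : k + 1 + 2 - 2 = k + 1 := by omega
      rw [hk2]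
      have hstep : ∀ c ∈ Finset.Icc 1 (k + 1),
          (tris (c + 1)).card * (tris (k + 1 + 2 - c)).card
            = catalan (c - 1) * catalan (k + 1 - c) := by
        intro c hc
        obtain ⟨hc1, hc2⟩ := Finset.mem_Icc.1 hc
        have e1 : c + 1 = (c - 1) + 2 := by omega
        have e2 : k + 1 + 2 - c = (k + 1 - c) + 2 := by omega
        rw [e1, e2, ih (c - 1) (by omega), ih (k + 1 - c) (by omega)]
      rw [Finset.sum_congr rfl hstep]
      rw [catalan_succ k]
      rw [Fin.sum_univ_eq_sum_range (fun i => catalan i * catalan (k - i))]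
      rw [show Finset.Icc 1 (k + 1) = Finset.Ico 1 (k + 2) from (Finset.Ico_add_one_right_eq_Icc 1 (k+1)).symm]
      rw [Finset.sum_Ico_eq_sum_range]
      refine Finset.sum_congr (by norm_num) fun i hi => ?_
      simp only [Finset.mem_range] at hi
      have e1 : 1 + i - 1 = i := by omega
      have e2 : k + 1 - (1 + i) = k - i := by omega
      rw [e1, e2]

noncomputable def atris (n k : ℕ) : Finset (Finset (ℕ × ℕ)) :=
  (tris (n + 2)).filter fun D => ∀ e ∈ D, e.1 ≠ k ∧ e.2 ≠ k

def lo (k v : ℕ) : ℕ := if v < k then v else v - 1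

def hi (k v : ℕ) : ℕ := if v < k then v else v + 1

def lop (k : ℕ) (d : ℕ × ℕ) : ℕ × ℕ := (lo k d.1, lo k d.2)

def hip (k : ℕ) (d : ℕ × ℕ) : ℕ × ℕ := (hi k d.1, hi k d.2)

lemma hi_ne {k v : ℕ} : hi k v ≠ k := by unfold hi; split_ifs <;> omega

lemma lo_hi {k v : ℕ} : lo k (hi k v) = v := by
  unfold lo hi; split_ifs <;> omega

lemma hi_lo {k v : ℕ} (h : v ≠ k) : hi k (lo k v) = v := by
  unfold lo hi; split_ifs <;> omega

lemma lop_hip {k : ℕ} {d : ℕ × ℕ} : lop k (hip k d) = d := by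
  simp only [lop, hip, lo_hi]

lemma hip_lop {k : ℕ} {d : ℕ × ℕ} (h1 : d.1 ≠ k) (h2 : d.2 ≠ k) :
    hip k (lop k d) = d := by
  simp only [lop, hip, hi_lo h1, hi_lo h2]

lemma crosses_lop {k : ℕ} {d e : ℕ × ℕ} (hd1 : d.1 ≠ k) (hd2 : d.2 ≠ k)
    (he1 : e.1 ≠ k) (he2 : e.2 ≠ k) :
    Crosses (lop k d) (lop k e) ↔ Crosses d e := by
  simp only [Crosses, lop, lo]
  split_ifs <;> omega

lemma crosses_hip {k : ℕ} {d e : ℕ × ℕ} :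
    Crosses (hip k d) (hip k e) ↔ Crosses d e := by
  simp only [Crosses, hip, hi]
  split_ifs <;> omega

lemma isDiag_lop {n k : ℕ} {d : ℕ × ℕ} (hk1 : 1 ≤ k) (hkn : k ≤ n)
    (hd : IsDiag (n + 2) d) (hd1 : d.1 ≠ k) (hd2 : d.2 ≠ k)
    (hne : d ≠ (k - 1, k + 1)) : IsDiag (n + 1) (lop k d) := by
  simp only [IsDiag, lop, lo, ne_eq, Prod.ext_iff] at *
  split_ifs <;> omega

lemma isDiag_hip {n k : ℕ} {d : ℕ × ℕ} (hk1 : 1 ≤ k) (hkn : k ≤ n)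
    (hd : IsDiag (n + 1) d) : IsDiag (n + 2) (hip k d) := by
  simp only [IsDiag, hip, hi, ne_eq, Prod.ext_iff] at *
  split_ifs <;>
    (try simp only [false_and, and_false, not_false_eq_true, and_true, true_and]) <;>
    first | trivial | omega

lemma isDiag_chord {n k : ℕ} (hk1 : 1 ≤ k) (hkn : k ≤ n) (hn : 2 ≤ n) :
    IsDiag (n + 2) (k - 1, k + 1) := by
  simp only [IsDiag]; omega

lemma chord_mem {n k : ℕ} (hk1 : 1 ≤ k) (hkn : k ≤ n) (hn : 2 ≤ n)
    {D : Finset (ℕ × ℕ)} (hD : D ∈ atris n k) : (k - 1, k + 1) ∈ D := by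
  obtain ⟨hDt, hav⟩ := Finset.mem_filter.1 hD
  obtain ⟨hdiag, hnc, hmax⟩ := mem_tris.1 hDt
  apply hmax _ (isDiag_chord hk1 hkn hn)
  intro e he hcr
  have := hav e he
  simp only [Crosses] at hcr
  omega

lemma psi_mem {n k : ℕ} (hk1 : 1 ≤ k) (hkn : k ≤ n) (hn : 2 ≤ n)
    {D : Finset (ℕ × ℕ)} (hD : D ∈ atris n k) :
    (D.erase (k - 1, k + 1)).image (lop k) ∈ tris (n + 1) := by
  obtain ⟨hDt, hav⟩ := Finset.mem_filter.1 hD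
  obtain ⟨hdiag, hnc, hmax⟩ := mem_tris.1 hDt
  rw [mem_tris]
  refine ⟨?_, ?_, ?_⟩
  · rintro d' hd'
    obtain ⟨d, hd, rfl⟩ := Finset.mem_image.1 hd'
    obtain ⟨hdne, hdD⟩ := Finset.mem_erase.1 hd
    exact isDiag_lop hk1 hkn (hdiag d hdD) (hav d hdD).1 (hav d hdD).2 hdne
  · rintro d' hd' e' he' hcr
    obtain ⟨d, hd, rfl⟩ := Finset.mem_image.1 hd'
    obtain ⟨e, he, rfl⟩ := Finset.mem_image.1 he'
    obtain ⟨-, hdD⟩ := Finset.mem_erase.1 hd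
    obtain ⟨-, heD⟩ := Finset.mem_erase.1 he
    exact hnc d hdD e heD ((crosses_lop (hav d hdD).1 (hav d hdD).2
      (hav e heD).1 (hav e heD).2).1 hcr)
  · intro d' hdg hncd
    have hdg' := hdg; simp only [IsDiag] at hdg'
    have hdD : hip k d' ∈ D := by
      apply hmax _ (isDiag_hip hk1 hkn hdg)
      intro e he hcr
      by_cases hech : e = (k - 1, k + 1)
      · subst hech
        have n1 : hi k d'.1 ≠ k := hi_ne
        have n2 : hi k d'.2 ≠ k := hi_ne
        simp only [Crosses, hip] at hcr
        omega
      · apply hncd (lop k e) (Finset.mem_image.2 ⟨e, Finset.mem_erase.2 ⟨hech, he⟩, rfl⟩)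
        have : Crosses (lop k (hip k d')) (lop k e) := by
          rw [crosses_lop hi_ne hi_ne (hav e he).1 (hav e he).2]
          exact hcr
        rwa [lop_hip] at this
    have hdne : hip k d' ≠ (k - 1, k + 1) := by
      simp only [hip, hi, ne_eq, Prod.ext_iff]
      split_ifs <;> omega
    refine Finset.mem_image.2 ⟨hip k d', Finset.mem_erase.2 ⟨hdne, hdD⟩, lop_hip⟩

lemma psi'_mem {n k : ℕ} (hk1 : 1 ≤ k) (hkn : k ≤ n) (hn : 2 ≤ n)
    {E : Finset (ℕ × ℕ)} (hE : E ∈ tris (n + 1)) :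
    E.image (hip k) ∪ {(k - 1, k + 1)} ∈ atris n k := by
  obtain ⟨hdiag, hnc, hmax⟩ := mem_tris.1 hE
  have hmem : ∀ d, d ∈ E.image (hip k) ∪ {(k - 1, k + 1)} ↔
      (∃ e ∈ E, hip k e = d) ∨ d = (k - 1, k + 1) := by
    intro d
    simp [Finset.mem_union, Finset.mem_image, or_comm]
  refine Finset.mem_filter.2 ⟨mem_tris.2 ⟨?_, ?_, ?_⟩, ?_⟩
  · intro d hd
    rcases (hmem d).1 hd with ⟨e, he, rfl⟩ | rfl
    · exact isDiag_hip hk1 hkn (hdiag e he)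
    · exact isDiag_chord hk1 hkn hn
  · intro d hd e he hcr
    rcases (hmem d).1 hd with ⟨a, ha, rfl⟩ | rfl <;>
      rcases (hmem e).1 he with ⟨b, hb, rfl⟩ | rfl
    · exact hnc a ha b hb (crosses_hip.1 hcr)
    · have n1 : hi k a.1 ≠ k := hi_ne
      have n2 : hi k a.2 ≠ k := hi_ne
      simp only [Crosses, hip] at hcr; omega
    · have n1 : hi k b.1 ≠ k := hi_ne
      have n2 : hi k b.2 ≠ k := hi_ne
      simp only [Crosses, hip] at hcr; omega
    · simp only [Crosses] at hcr; omega
  · intro d hdg hncd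
    have hdg' := hdg; simp only [IsDiag] at hdg'
    by_cases hch : d = (k - 1, k + 1)
    · exact (hmem d).2 (Or.inr hch)
    · have hd1 : d.1 ≠ k := by
        intro h
        refine hncd (k - 1, k + 1) ((hmem _).2 (Or.inr rfl)) (Or.inr ?_)
        simp only; omega
      have hd2 : d.2 ≠ k := by
        intro h
        refine hncd (k - 1, k + 1) ((hmem _).2 (Or.inr rfl)) (Or.inl ?_)
        simp only; omega
      have hld : lop k d ∈ E := by
        apply hmax _ (isDiag_lop hk1 hkn hdg hd1 hd2 hch)
        intro e he hcr
        apply hncd (hip k e) ((hmem _).2 (Or.inl ⟨e, he, rfl⟩))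
        have : Crosses (lop k d) (lop k (hip k e)) := by rwa [lop_hip]
        exact (crosses_lop hd1 hd2 hi_ne hi_ne).1 this
      refine (hmem d).2 (Or.inl ⟨lop k d, hld, hip_lop hd1 hd2⟩)
  · intro e he
    rcases (hmem e).1 he with ⟨a, ha, rfl⟩ | rfl
    · exact ⟨hi_ne, hi_ne⟩
    · constructor <;> simp only <;> omega

lemma psi_psi' {n k : ℕ} (hk1 : 1 ≤ k) (hkn : k ≤ n) (hn : 2 ≤ n)
    {D : Finset (ℕ × ℕ)} (hD : D ∈ atris n k) :
    ((D.erase (k - 1, k + 1)).image (lop k)).image (hip k) ∪ {(k - 1, k + 1)} = D := by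
  obtain ⟨hDt, hav⟩ := Finset.mem_filter.1 hD
  ext d
  simp only [Finset.mem_union, Finset.mem_image, Finset.mem_singleton, Finset.mem_erase]
  constructor
  · rintro (⟨d', ⟨e, ⟨hene, heD⟩, rfl⟩, rfl⟩ | rfl)
    · rwa [hip_lop (hav e heD).1 (hav e heD).2]
    · exact chord_mem hk1 hkn hn hD
  · intro hd
    by_cases hch : d = (k - 1, k + 1)
    · exact Or.inr hch
    · exact Or.inl ⟨lop k d, ⟨d, ⟨hch, hd⟩, rfl⟩, hip_lop (hav d hd).1 (hav d hd).2⟩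

lemma psi'_psi {n k : ℕ} (hk1 : 1 ≤ k) (hkn : k ≤ n) (hn : 2 ≤ n)
    {E : Finset (ℕ × ℕ)} (hE : E ∈ tris (n + 1)) :
    ((E.image (hip k) ∪ {(k - 1, k + 1)}).erase (k - 1, k + 1)).image (lop k) = E := by
  have hdiag := (mem_tris.1 hE).1
  have hch : (k - 1, k + 1) ∉ E.image (hip k) := by
    rintro h
    obtain ⟨e, he, heq⟩ := Finset.mem_image.1 h
    have := hdiag e he
    simp only [IsDiag, hip, hi, Prod.ext_iff] at this heq
    split_ifs at heq <;> omega
  have : (E.image (hip k) ∪ {(k - 1, k + 1)}).erase (k - 1, k + 1) = E.image (hip k) := by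
    rw [Finset.union_comm, ← Finset.insert_eq, Finset.erase_insert hch]
  rw [this, Finset.image_image]
  have : ∀ e ∈ E, (lop k ∘ hip k) e = id e := fun e _ => lop_hip
  rw [Finset.image_congr this, Finset.image_id]

lemma card_atris {n k : ℕ} (hn : 1 ≤ n) (hk1 : 1 ≤ k) (hkn : k ≤ n) :
    (atris n k).card = catalan (n - 1) := by
  rcases Nat.lt_or_ge n 2 with h2 | h2
  · have hn1 : n = 1 := by omega
    subst hn1
    have : atris 1 k = {∅} := by
      unfold atris
      rw [tris_small (by omega)]
      ext D
      simp only [Finset.mem_filter, Finset.mem_singleton]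
      constructor
      · exact fun h => h.1
      · rintro rfl
        exact ⟨rfl, fun e he => absurd he (Finset.notMem_empty e)⟩
    rw [this]; simp
  · have key : (atris n k).card = (tris (n + 1)).card := by
      refine Finset.card_nbij' (fun D => (D.erase (k - 1, k + 1)).image (lop k))
        (fun E => E.image (hip k) ∪ {(k - 1, k + 1)}) ?_ ?_ ?_ ?_
      · exact fun D hD => psi_mem hk1 hkn h2 hD
      · exact fun E hE => psi'_mem hk1 hkn h2 hE
      · exact fun D hD => psi_psi' hk1 hkn h2 hD
      · exact fun E hE => psi'_psi hk1 hkn h2 hE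
    rw [key, show n + 1 = (n - 1) + 2 by omega, card_tris]

lemma catalan_pos' (n : ℕ) : 0 < catalan n := by
  have h := succ_mul_catalan_eq_centralBinom n
  have h2 := Nat.centralBinom_pos n
  by_contra hc
  push_neg at hc
  have h0 : catalan n = 0 := by omega
  rw [h0, mul_zero] at h
  omega

lemma ratio_eq (n : ℕ) (hn : 1 ≤ n) :
    (catalan (n - 1) : ℝ) / (catalan n : ℝ) = ((n : ℝ) + 1) / (2 * (2 * (n : ℝ) - 1)) := by
  obtain ⟨m, rfl⟩ : ∃ m, n = m + 1 := ⟨n - 1, by omega⟩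
  have h1 : (m + 1) * catalan m = Nat.centralBinom m :=
    succ_mul_catalan_eq_centralBinom m
  have h2 : (m + 2) * catalan (m + 1) = Nat.centralBinom (m + 1) := by
    have := succ_mul_catalan_eq_centralBinom (m + 1)
    linarith
  have h3 : (m + 1) * Nat.centralBinom (m + 1) = 2 * (2 * m + 1) * Nat.centralBinom m :=
    Nat.succ_mul_centralBinom_succ m
  have key : 2 * (2 * m + 1) * catalan m * (m + 1) = (m + 2) * catalan (m + 1) * (m + 1) := by
    calc 2 * (2 * m + 1) * catalan m * (m + 1)
        = 2 * (2 * m + 1) * ((m + 1) * catalan m) := by ring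
      _ = 2 * (2 * m + 1) * Nat.centralBinom m := by rw [h1]
      _ = (m + 1) * Nat.centralBinom (m + 1) := h3.symm
      _ = (m + 1) * ((m + 2) * catalan (m + 1)) := by rw [h2]
      _ = (m + 2) * catalan (m + 1) * (m + 1) := by ring
  have key' : 2 * (2 * m + 1) * catalan m = (m + 2) * catalan (m + 1) :=
    Nat.eq_of_mul_eq_mul_right (by omega) key
  have keyR : 2 * (2 * (m : ℝ) + 1) * (catalan m : ℝ)
      = ((m : ℝ) + 2) * (catalan (m + 1) : ℝ) := by exact_mod_cast key'
  have hc : (0 : ℝ) < (catalan (m + 1) : ℝ) := by exact_mod_cast catalan_pos' (m + 1)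
  have hden : (0 : ℝ) < 2 * (2 * ((m : ℝ) + 1) - 1) := by
    have : (0 : ℝ) ≤ (m : ℝ) := Nat.cast_nonneg m
    linarith
  have hsimp : (m + 1 - 1 : ℕ) = m := by omega
  rw [hsimp]
  push_cast
  rw [div_eq_div_iff hc.ne' hden.ne']
  linear_combination keyR

lemma ratio_bounds (n : ℕ) (hn : 1 ≤ n) :
    |(catalan (n - 1) : ℝ) / (catalan n : ℝ) - 1 / 4| ≤ (3 / 2) / (n : ℝ) ∧
    |(n : ℝ) * ((catalan (n - 1) : ℝ) / (catalan n : ℝ)) - (n : ℝ) / 4| ≤ 3 / 2 := by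
  have hn' : (1 : ℝ) ≤ (n : ℝ) := by exact_mod_cast hn
  have hnpos : (0 : ℝ) < (n : ℝ) := by linarith
  have hden : (0 : ℝ) < 2 * (2 * (n : ℝ) - 1) := by linarith
  rw [ratio_eq n hn]
  have key : ((n : ℝ) + 1) / (2 * (2 * (n : ℝ) - 1)) - 1 / 4
      = 3 / (4 * (2 * (n : ℝ) - 1)) := by
    have h1 : (2 * (2 * (n : ℝ) - 1)) ≠ 0 := hden.ne'
    have h2 : (4 * (2 * (n : ℝ) - 1)) ≠ 0 := by intro h; apply h1; linarith
    rw [div_sub_div _ _ h1 (by norm_num), div_eq_div_iff (mul_ne_zero h1 (by norm_num)) h2]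
    ring
  have habs : |((n : ℝ) + 1) / (2 * (2 * (n : ℝ) - 1)) - 1 / 4|
      = 3 / (4 * (2 * (n : ℝ) - 1)) := by
    rw [key, abs_of_nonneg (div_nonneg (by norm_num) (by linarith))]
  have hb1 : 3 / (4 * (2 * (n : ℝ) - 1)) ≤ (3 / 2) / (n : ℝ) := by
    rw [div_le_div_iff₀ (by linarith) hnpos]
    nlinarith
  constructor
  · rw [habs]; exact hb1
  · have e1 : (n : ℝ) * (((n : ℝ) + 1) / (2 * (2 * (n : ℝ) - 1))) - (n : ℝ) / 4
        = (n : ℝ) * (((n : ℝ) + 1) / (2 * (2 * (n : ℝ) - 1)) - 1 / 4) := by ring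
    rw [e1, abs_mul, abs_of_nonneg hnpos.le, habs]
    calc (n : ℝ) * (3 / (4 * (2 * (n : ℝ) - 1)))
        ≤ (n : ℝ) * ((3 / 2) / (n : ℝ)) := by
          exact mul_le_mul_of_nonneg_left hb1 hnpos.le
      _ = 3 / 2 := by field_simp

lemma natCard_full (n : ℕ) :
    Nat.card {D : Finset (ℕ × ℕ) // IsPolygonTriangulation (n + 2) D} = catalan n := by
  rw [Nat.card_congr (Equiv.subtypeEquivRight
    (fun D => (mem_tris (m := n + 2) (D := D)).symm))]
  rw [Nat.card_eq_finsetCard]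
  exact card_tris n

lemma natCard_avoid {n k : ℕ} (hn : 1 ≤ n) (hk1 : 1 ≤ k) (hkn : k ≤ n) :
    Nat.card {D : Finset (ℕ × ℕ) // IsPolygonTriangulation (n + 2) D ∧
      ∀ e ∈ D, e.1 ≠ k ∧ e.2 ≠ k} = catalan (n - 1) := by
  have hiff : ∀ D : Finset (ℕ × ℕ),
      (IsPolygonTriangulation (n + 2) D ∧ ∀ e ∈ D, e.1 ≠ k ∧ e.2 ≠ k) ↔
        D ∈ atris n k := by
    intro D
    rw [atris, Finset.mem_filter, mem_tris]
  rw [Nat.card_congr (Equiv.subtypeEquivRight hiff)]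
  rw [Nat.card_eq_finsetCard]
  exact card_atris hn hk1 hkn

end Stmt10

/-- For `n` points on a convex arc spanned by one edge of a
bounding triangle, the relevant region is a convex polygon with `n + 2`
vertices (`0` and `n+1` being the endpoints of the triangle edge, and
`1, …, n` the arc points); all edges outside it are forced.  An arc point `k`
has degree `3` in a uniformly random triangulation exactly when no diagonal of
the polygon is incident to it.  The probability of this event equals
`C (n-1) / C n = (n+1)/(2(2n-1)) = 1/4 + O(1/n)`; hence the expected number of
degree-`3` arc points is `n/4 + O(1)`. -/
theorem stmt10 :
    (∀ n k : ℕ, 1 ≤ n → 1 ≤ k → k ≤ n →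
      (Nat.card {D : Finset (ℕ × ℕ) // IsPolygonTriangulation (n + 2) D ∧
          ∀ e ∈ D, e.1 ≠ k ∧ e.2 ≠ k} : ℝ) /
        (Nat.card {D : Finset (ℕ × ℕ) // IsPolygonTriangulation (n + 2) D} : ℝ) =
        (catalan (n - 1) : ℝ) / (catalan n : ℝ)) ∧
    (∀ n : ℕ, 1 ≤ n →
      (catalan (n - 1) : ℝ) / (catalan n : ℝ) = ((n : ℝ) + 1) / (2 * (2 * (n : ℝ) - 1))) ∧
    (∃ C : ℝ, 0 < C ∧ ∀ n : ℕ, 1 ≤ n →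
      |(catalan (n - 1) : ℝ) / (catalan n : ℝ) - 1 / 4| ≤ C / (n : ℝ) ∧
      |(n : ℝ) * ((catalan (n - 1) : ℝ) / (catalan n : ℝ)) - (n : ℝ) / 4| ≤ C) := by
  refine ⟨?_, fun n hn => Stmt10.ratio_eq n hn,
    ⟨3 / 2, by norm_num, fun n hn => Stmt10.ratio_bounds n hn⟩⟩
  intro n k hn hk1 hkn
  rw [Stmt10.natCard_full n, Stmt10.natCard_avoid hn hk1 hkn]
end

section
/- If a vint u can be flipped down to a vint u′ (u →* u′), then supp(u) ≥ supp(u′). -/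
attribute [local instance] Classical.propDecidable

noncomputable section

/-- Points of the Euclidean plane. -/
abbrev Pt : Type := ℝ × ℝ

/-- A finite planar point set is in *general position* if no three of its
points are collinear. -/
def GenPos (S : Finset Pt) : Prop :=
  ∀ p ∈ S, ∀ q ∈ S, ∀ r ∈ S, p ≠ q → p ≠ r → q ≠ r →
    ¬ Collinear ℝ ({p, q, r} : Set Pt)

/-- Two closed straight-line segments are *compatible* if they coincide (as
unordered segments) or meet only in common endpoints (i.e. they do not cross,
nor overlap, nor does an endpoint of one lie in the relative interior of the
other). -/
def SegCompat (e f : Pt × Pt) : Prop :=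
  ({e.1, e.2} : Set Pt) = ({f.1, f.2} : Set Pt) ∨
    segment ℝ e.1 e.2 ∩ segment ℝ f.1 f.2 ⊆
      ({e.1, e.2} : Set Pt) ∩ ({f.1, f.2} : Set Pt)

/-- An edge `e` is *admissible* for the point set `S` and the current edge set
`E`: its endpoints are distinct points of `S`, no point of `S` lies in its
relative interior, and it is compatible with every edge of `E`. -/
def Admissible (S : Finset Pt) (E : Finset (Pt × Pt)) (e : Pt × Pt) : Prop :=
  e.1 ∈ S ∧ e.2 ∈ S ∧ e.1 ≠ e.2 ∧
    (∀ p ∈ S, p ∈ segment ℝ e.1 e.2 → p = e.1 ∨ p = e.2) ∧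
    ∀ f ∈ E, SegCompat e f

/-- A *triangulation* of a finite planar point set `S`: a maximal planar
(crossing-free) straight-line graph on `S`.  Edges are recorded as ordered
pairs, symmetrically. -/
structure Triangulation (S : Finset Pt) where
  edges : Finset (Pt × Pt)
  adm : ∀ e ∈ edges, Admissible S edges e
  symm : ∀ e ∈ edges, (e.2, e.1) ∈ edges
  maximal : ∀ e : Pt × Pt, Admissible S edges e → e ∈ edges

namespace Triangulation

variable {S : Finset Pt}

/-- The undirected edges of a triangulation. -/
def und (T : Triangulation S) : Finset (Finset Pt) :=
  T.edges.image fun e => {e.1, e.2}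

/-- The degree (number of neighbours) of a point in a triangulation. -/
def degree (T : Triangulation S) (p : Pt) : ℕ :=
  (T.edges.filter fun e => e.1 = p).card

end Triangulation

/-- `S` has a triangular convex hull with corners `a, b, c ∈ S`. -/
def TriHull (S : Finset Pt) (a b c : Pt) : Prop :=
  a ∈ S ∧ b ∈ S ∧ c ∈ S ∧ a ≠ b ∧ a ≠ c ∧ b ≠ c ∧
    convexHull ℝ (S : Set Pt) = convexHull ℝ ({a, b, c} : Set Pt)

/-- The interior points of `S` (all points except the three hull corners). -/
def intPts (S : Finset Pt) (a b c : Pt) : Finset Pt :=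
  ((S.erase a).erase b).erase c

/-- `vcount S a b c T i` is the number of interior points of degree `i` in the
triangulation `T` (the quantity `v_i(T)`). -/
def vcount (S : Finset Pt) (a b c : Pt) (T : Triangulation S) (i : ℕ) : ℕ :=
  ((intPts S a b c).filter fun p => T.degree p = i).card

/-- A single *down-flip* at the point `p`: the triangulation `T'` is obtained
from `T` by flipping one edge incident to `p` (so exactly one undirected edge
is exchanged, and the degree of `p` drops by one). -/
def FlipStep {S : Finset Pt} (p : Pt) (T T' : Triangulation S) : Prop :=
  (T.und \ T'.und).card = 1 ∧ (T'.und \ T.und).card = 1 ∧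
    T'.degree p + 1 = T.degree p

/-- The vint `(p, T)` *can be flipped down to* `(p, T')`: the reflexive
transitive closure of single down-flips at `p`. -/
def FlipsDown {S : Finset Pt} (p : Pt) : Triangulation S → Triangulation S → Prop :=
  Relation.ReflTransGen (FlipStep p)

/-- The *support* of the vint `(p, T)`: the number of 3-vints it can be
flipped down to. -/
def supp {S : Finset Pt} (p : Pt) (T : Triangulation S) : ℕ :=
  Nat.card {T' : Triangulation S // FlipsDown p T T' ∧ T'.degree p = 3}

lemma tri_ext {S : Finset Pt} {T T' : Triangulation S} (h : T.edges = T'.edges) : T = T' := by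
  cases T; cases T'; simp_all

instance triFinite (S : Finset Pt) : Finite (Triangulation S) := by
  have : Function.Injective (fun T : Triangulation S =>
      (⟨T.edges, by
        simp only [Finset.mem_powerset]
        intro e he
        have h := T.adm e he
        simp [Finset.mem_product, h.1, h.2.1]⟩ :
        (S ×ˢ S).powerset)) := by
    intro T T' h
    exact tri_ext (congrArg Subtype.val h)
  exact Finite.of_injective _ this

/-- If the vint `u = (p, T)` can be flipped down to
`u' = (p, T')`, then `supp u ≥ supp u'`. -/
theorem stmt12 (S : Finset Pt) (a b c : Pt)
    (hgp : GenPos S) (hhull : TriHull S a b c)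
    (p : Pt) (hp : p ∈ intPts S a b c)
    (T T' : Triangulation S) (h : FlipsDown p T T') :
    supp p T' ≤ supp p T := by
  have hfin : Finite {T'' : Triangulation S // FlipsDown p T T'' ∧ T''.degree p = 3} :=
    Subtype.finite
  refine Nat.card_le_card_of_injective
    (fun x => ⟨x.1, Relation.ReflTransGen.trans h x.2.1, x.2.2⟩) ?_
  intro x y hxy
  simp only [Subtype.mk.injEq] at hxy
  exact Subtype.ext hxy
end
end

section
/- Let P be a convex polygon with n+2 vertices and let r ≤ n/2 pairwise non-adjacent 'forbidden' diagonals be specified, each connecting the two neighbors of a distinct vertex. The number of triangulations of the polygon avoiding all r forbidden diagonals is C_n^{(r)} := Σ_{i=0}^{r} (−1)^i · binomial(r, i) · C_{n−i}. -/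
/-- The *ear diagonal* of vertex `k` of the convex polygon with vertices
`0, …, n-1`: the (normalized) diagonal joining the two cyclic neighbours of
`k`. -/
def earDiag (n k : ℕ) : ℕ × ℕ :=
  if k = 0 then (1, n - 1)
  else if k = n - 1 then (0, n - 2)
  else (k - 1, k + 1)

namespace Stmt18

/-- diagonal of the polygon with vertex set `V` (in increasing = convex position order). -/
def GDiag (V : Finset ℕ) (d : ℕ × ℕ) : Prop :=
  d.1 ∈ V ∧ d.2 ∈ V ∧ (∃ c ∈ V, d.1 < c ∧ c < d.2) ∧ (∃ x ∈ V, x < d.1 ∨ d.2 < x)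

def GTri (V : Finset ℕ) (D : Finset (ℕ × ℕ)) : Prop :=
  (∀ d ∈ D, GDiag V d) ∧ (∀ d ∈ D, ∀ e ∈ D, ¬ Crosses d e) ∧
    ∀ d : ℕ × ℕ, GDiag V d → (∀ e ∈ D, ¬ Crosses d e) → d ∈ D

noncomputable def tris (V : Finset ℕ) : Finset (Finset (ℕ × ℕ)) :=
  @Finset.filter _ (fun D => GTri V D) (Classical.decPred _) (V ×ˢ V).powerset

lemma GDiag.lt {V d} (h : GDiag V d) : d.1 < d.2 := by
  obtain ⟨-, -, ⟨c, -, h1, h2⟩, -⟩ := h; omega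

lemma mem_tris {V : Finset ℕ} {D : Finset (ℕ × ℕ)} : D ∈ tris V ↔ GTri V D := by
  simp only [tris, Finset.mem_filter, Finset.mem_powerset, and_iff_right_iff_imp]
  intro h d hd
  obtain ⟨h1, h2, -, -⟩ := h.1 d hd
  exact Finset.mem_product.2 ⟨h1, h2⟩

lemma crosses_comm {d e : ℕ × ℕ} : Crosses d e ↔ Crosses e d := or_comm

lemma not_crosses_self {d : ℕ × ℕ} : ¬ Crosses d d := by
  unfold Crosses; omega

def ApexAt (V : Finset ℕ) (D : Finset (ℕ × ℕ)) (a b j : ℕ) : Prop :=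
  j ∈ V ∧ a < j ∧ j < b ∧
    ((a, j) ∈ D ∨ ¬∃ c ∈ V, a < c ∧ c < j) ∧
    ((j, b) ∈ D ∨ ¬∃ c ∈ V, j < c ∧ c < b)

lemma apex_lt_of_both {V D a b j j'} (hD : GTri V D) (haM : ∀ x ∈ V, a ≤ x)
    (hj : ApexAt V D a b j) (hj' : ApexAt V D a b j') (hlt : j < j') : False := by
  obtain ⟨hjV, hja, hjb, hj4, hj5⟩ := hj
  obtain ⟨hj'V, hj'a, hj'b, hj'4, hj'5⟩ := hj'
  have h1 : (a, j') ∈ D := by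
    rcases hj'4 with h | h
    · exact h
    · exact absurd ⟨j, hjV, hja, hlt⟩ h
  have h2 : (j, b) ∈ D := by
    rcases hj5 with h | h
    · exact h
    · exact absurd ⟨j', hj'V, hlt, hj'b⟩ h
  exact hD.2.1 _ h1 _ h2 (Or.inl ⟨hja, hlt, hj'b⟩)

lemma apex_unique {V D a b j j'} (hD : GTri V D) (haM : ∀ x ∈ V, a ≤ x)
    (hj : ApexAt V D a b j) (hj' : ApexAt V D a b j') : j = j' := by
  rcases lt_trichotomy j j' with h | h | h
  · exact absurd (apex_lt_of_both hD haM hj hj' h) not_false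
  · exact h
  · exact absurd (apex_lt_of_both hD haM hj' hj h) not_false

lemma exists_apex {V : Finset ℕ} {D a b} (hD : GTri V D) (ha : a ∈ V)
    (haM : ∀ x ∈ V, a ≤ x) (hb : b ∈ V) (hbM : ∀ x ∈ V, x ≤ b)
    (hmid : ∃ j ∈ V, a < j ∧ j < b) : ∃ j, ApexAt V D a b j := by
  classical
  set S : Finset ℕ := V.filter
    (fun j => a < j ∧ j < b ∧ ((a, j) ∈ D ∨ ¬∃ c ∈ V, a < c ∧ c < j)) with hS
  obtain ⟨j₀, hj₀V, hj₀a, hj₀b⟩ := hmid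
  have hIne : (V.filter (fun x => a < x ∧ x < b)).Nonempty :=
    ⟨j₀, Finset.mem_filter.2 ⟨hj₀V, hj₀a, hj₀b⟩⟩
  set m := (V.filter (fun x => a < x ∧ x < b)).min' hIne with hm
  have hmmem := (V.filter (fun x => a < x ∧ x < b)).min'_mem hIne
  rw [Finset.mem_filter] at hmmem
  have hmS : m ∈ S := by
    rw [hS, Finset.mem_filter]
    refine ⟨hmmem.1, hmmem.2.1, hmmem.2.2, Or.inr ?_⟩
    rintro ⟨c, hcV, hac, hcm⟩
    have : m ≤ c := Finset.min'_le _ _ (Finset.mem_filter.2 ⟨hcV, hac, hcm.trans hmmem.2.2⟩)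
    omega
  have hSne : S.Nonempty := ⟨m, hmS⟩
  set j := S.max' hSne with hj
  have hjS := S.max'_mem hSne
  obtain ⟨hjV, hja, hjb, hj4⟩ := Finset.mem_filter.1 hjS
  refine ⟨j, hjV, hja, hjb, hj4, ?_⟩
  by_cases hc : ∃ c ∈ V, j < c ∧ c < b
  · left
    apply hD.2.2
    · exact ⟨hjV, hb, hc, ⟨a, ha, Or.inl hja⟩⟩
    · intro e he hcr
      have heD := hD.1 e he
      have he1V := heD.1
      have he2V := heD.2.1
      rcases hcr with ⟨h1, h2, h3⟩ | ⟨h1, h2, h3⟩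
      · exact absurd (hbM _ he2V) (by omega)
      · -- e.1 < j < e.2 < b
        by_cases hea : e.1 = a
        · have heS : e.2 ∈ S := by
            rw [hS, Finset.mem_filter]
            refine ⟨he2V, by omega, h3, Or.inl ?_⟩
            have : (a, e.2) = e := by rw [← hea]
            rw [this]; exact he
          have := Finset.le_max' S _ heS
          omega
        · have hae : a < e.1 := lt_of_le_of_ne (haM _ he1V) (Ne.symm hea)
          rcases hj4 with h4 | h4
          · exact hD.2.1 _ h4 _ he (Or.inl ⟨hae, h1, h2⟩)
          · exact h4 ⟨e.1, he1V, hae, h1⟩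
  · right; exact hc


lemma not_crosses_sep {d e : ℕ × ℕ} (h : d.2 ≤ e.1) : ¬ Crosses d e ∧ ¬ Crosses e d := by
  unfold Crosses; omega

lemma not_crosses_nested {d e : ℕ × ℕ} (h1 : e.1 ≤ d.1) (h2 : d.2 ≤ e.2) :
    ¬ Crosses d e ∧ ¬ Crosses e d := by
  unfold Crosses; omega

lemma gdiag_down_left {V : Finset ℕ} {d : ℕ × ℕ} {a j : ℕ} (hd : GDiag V d)
    (ha : a ∈ V) (haM : ∀ x ∈ V, a ≤ x) (hjV : j ∈ V) (haj : a ≤ j)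
    (hdj : d.2 ≤ j) (hne : ¬(d.1 = a ∧ d.2 = j)) :
    GDiag (V.filter (· ≤ j)) d := by
  obtain ⟨h1, h2, ⟨c, hcV, hc1, hc2⟩, hout⟩ := hd
  refine ⟨Finset.mem_filter.2 ⟨h1, by omega⟩, Finset.mem_filter.2 ⟨h2, hdj⟩,
    ⟨c, Finset.mem_filter.2 ⟨hcV, by omega⟩, hc1, hc2⟩, ?_⟩
  by_cases hda : d.1 = a
  · have hdj2 : d.2 < j := lt_of_le_of_ne hdj (fun h => hne ⟨hda, h⟩)
    exact ⟨j, Finset.mem_filter.2 ⟨hjV, le_refl j⟩, Or.inr hdj2⟩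
  · exact ⟨a, Finset.mem_filter.2 ⟨ha, haj⟩,
      Or.inl (lt_of_le_of_ne (haM _ h1) (Ne.symm hda))⟩

lemma gdiag_up_left {V : Finset ℕ} {d : ℕ × ℕ} {a b j : ℕ}
    (hd : GDiag (V.filter (· ≤ j)) d) (haM : ∀ x ∈ V, a ≤ x) (hb : b ∈ V) (hjb : j < b) :
    GDiag V d ∧ d.2 ≤ j ∧ ¬(d.1 = a ∧ d.2 = j) := by
  obtain ⟨h1, h2, ⟨c, hcV, hc1, hc2⟩, hout⟩ := hd
  rw [Finset.mem_filter] at h1 h2 hcV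
  refine ⟨⟨h1.1, h2.1, ⟨c, hcV.1, hc1, hc2⟩, ⟨b, hb, Or.inr (by omega)⟩⟩, h2.2, ?_⟩
  rintro ⟨hda, hdj⟩
  obtain ⟨x, hxV, hx⟩ := hout
  rw [Finset.mem_filter] at hxV
  have := haM x hxV.1
  omega

lemma gdiag_down_right {V : Finset ℕ} {d : ℕ × ℕ} {b j : ℕ} (hd : GDiag V d)
    (hb : b ∈ V) (hbM : ∀ x ∈ V, x ≤ b) (hjV : j ∈ V) (hjb : j ≤ b)
    (hdj : j ≤ d.1) (hne : ¬(d.1 = j ∧ d.2 = b)) :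
    GDiag (V.filter (j ≤ ·)) d := by
  obtain ⟨h1, h2, ⟨c, hcV, hc1, hc2⟩, hout⟩ := hd
  refine ⟨Finset.mem_filter.2 ⟨h1, hdj⟩, Finset.mem_filter.2 ⟨h2, by omega⟩,
    ⟨c, Finset.mem_filter.2 ⟨hcV, by omega⟩, hc1, hc2⟩, ?_⟩
  by_cases hdb : d.2 = b
  · have hdj1 : j < d.1 := lt_of_le_of_ne hdj (fun h => hne ⟨h.symm, hdb⟩)
    exact ⟨j, Finset.mem_filter.2 ⟨hjV, le_refl j⟩, Or.inl hdj1⟩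
  · exact ⟨b, Finset.mem_filter.2 ⟨hb, hjb⟩,
      Or.inr (lt_of_le_of_ne (hbM _ h2) hdb)⟩

lemma gdiag_up_right {V : Finset ℕ} {d : ℕ × ℕ} {a b j : ℕ}
    (hd : GDiag (V.filter (j ≤ ·)) d) (hbM : ∀ x ∈ V, x ≤ b) (ha : a ∈ V) (haj : a < j) :
    GDiag V d ∧ j ≤ d.1 ∧ ¬(d.1 = j ∧ d.2 = b) := by
  obtain ⟨h1, h2, ⟨c, hcV, hc1, hc2⟩, hout⟩ := hd
  rw [Finset.mem_filter] at h1 h2 hcV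
  refine ⟨⟨h1.1, h2.1, ⟨c, hcV.1, hc1, hc2⟩, ⟨a, ha, Or.inl (by omega)⟩⟩, h1.2, ?_⟩
  rintro ⟨hdj, hdb⟩
  obtain ⟨x, hxV, hx⟩ := hout
  rw [Finset.mem_filter] at hxV
  have := hbM x hxV.1
  omega

/-- every diagonal of a triangulation with apex `j` lies on one side of `j`. -/
lemma split_sides {V : Finset ℕ} {D : Finset (ℕ × ℕ)} {a b j : ℕ} (hD : GTri V D)
    (haM : ∀ x ∈ V, a ≤ x) (hbM : ∀ x ∈ V, x ≤ b) (hap : ApexAt V D a b j)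
    {d : ℕ × ℕ} (hd : d ∈ D) : d.2 ≤ j ∨ j ≤ d.1 := by
  obtain ⟨hjV, hja, hjb, h4, h5⟩ := hap
  by_contra hcon
  push_neg at hcon
  obtain ⟨hjd2, hd1j⟩ := hcon
  have hdD := hD.1 d hd
  obtain ⟨h1, h2, ⟨c, hcV, hc1, hc2⟩, ⟨x, hxV, hx⟩⟩ := hdD
  by_cases hda : d.1 = a
  · -- d = (a, d.2) with j < d.2 < b
    have hd2b : d.2 < b := by
      rcases hx with h | h
      · have := haM x hxV; omega
      · have := hbM x hxV; omega
    have hjbD : (j, b) ∈ D := by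
      rcases h4 with _ | _ <;> rcases h5 with h | h
      · exact h
      · exact absurd ⟨d.2, h2, hjd2, hd2b⟩ h
      · exact h
      · exact absurd ⟨d.2, h2, hjd2, hd2b⟩ h
    exact hD.2.1 d hd _ hjbD (Or.inl ⟨by omega, hjd2, hd2b⟩)
  · have hda' : a < d.1 := lt_of_le_of_ne (haM _ h1) (Ne.symm hda)
    have hajD : (a, j) ∈ D := by
      rcases h4 with h | h
      · exact h
      · exact absurd ⟨d.1, h1, hda', hd1j⟩ h
    exact hD.2.1 _ hajD d hd (Or.inl ⟨hda', hd1j, hjd2⟩)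

lemma gtri_left {V : Finset ℕ} {D : Finset (ℕ × ℕ)} {a b j : ℕ} (hD : GTri V D)
    (ha : a ∈ V) (haM : ∀ x ∈ V, a ≤ x) (hb : b ∈ V) (hbM : ∀ x ∈ V, x ≤ b)
    (hap : ApexAt V D a b j) :
    GTri (V.filter (· ≤ j)) (D.filter (fun d => d.2 ≤ j ∧ ¬(d.1 = a ∧ d.2 = j))) := by
  classical
  obtain ⟨hjV, hja, hjb, h4, h5⟩ := hap
  refine ⟨?_, ?_, ?_⟩
  · intro d hd
    rw [Finset.mem_filter] at hd
    exact gdiag_down_left (hD.1 d hd.1) ha haM hjV (le_of_lt hja) hd.2.1 hd.2.2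
  · intro d hd e he
    rw [Finset.mem_filter] at hd he
    exact hD.2.1 d hd.1 e he.1
  · intro d hgd hnc
    obtain ⟨hdV, hdj, hdne⟩ := gdiag_up_left hgd haM hb hjb
    have hdD : d ∈ D := by
      apply hD.2.2 d hdV
      intro e he
      rcases split_sides hD haM hbM ⟨hjV, hja, hjb, h4, h5⟩ he with hle | hge
      · by_cases hea : e.1 = a ∧ e.2 = j
        · exact (not_crosses_nested (le_of_eq_of_le hea.1 (haM _ hdV.1))
            (le_of_le_of_eq hdj hea.2.symm)).1
        · exact hnc e (Finset.mem_filter.2 ⟨he, hle, hea⟩)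
      · exact (not_crosses_sep (le_trans hdj hge)).1
    exact Finset.mem_filter.2 ⟨hdD, hdj, hdne⟩

lemma gtri_right {V : Finset ℕ} {D : Finset (ℕ × ℕ)} {a b j : ℕ} (hD : GTri V D)
    (ha : a ∈ V) (haM : ∀ x ∈ V, a ≤ x) (hb : b ∈ V) (hbM : ∀ x ∈ V, x ≤ b)
    (hap : ApexAt V D a b j) :
    GTri (V.filter (j ≤ ·)) (D.filter (fun d => j ≤ d.1 ∧ ¬(d.1 = j ∧ d.2 = b))) := by
  classical
  obtain ⟨hjV, hja, hjb, h4, h5⟩ := hap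
  refine ⟨?_, ?_, ?_⟩
  · intro d hd
    rw [Finset.mem_filter] at hd
    exact gdiag_down_right (hD.1 d hd.1) hb hbM hjV (le_of_lt hjb) hd.2.1 hd.2.2
  · intro d hd e he
    rw [Finset.mem_filter] at hd he
    exact hD.2.1 d hd.1 e he.1
  · intro d hgd hnc
    obtain ⟨hdV, hdj, hdne⟩ := gdiag_up_right hgd hbM ha hja
    have hdD : d ∈ D := by
      apply hD.2.2 d hdV
      intro e he
      rcases split_sides hD haM hbM ⟨hjV, hja, hjb, h4, h5⟩ he with hle | hge
      · exact (not_crosses_sep (le_trans hle hdj)).2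
      · by_cases hea : e.1 = j ∧ e.2 = b
        · exact (not_crosses_nested (le_of_eq_of_le hea.1 hdj)
            (le_of_le_of_eq (hbM _ hdV.2.1) hea.2.symm)).1
        · exact hnc e (Finset.mem_filter.2 ⟨he, hge, hea⟩)
    exact Finset.mem_filter.2 ⟨hdD, hdj, hdne⟩

noncomputable def glue (V : Finset ℕ) (a b j : ℕ) (D₁ D₂ : Finset (ℕ × ℕ)) :
    Finset (ℕ × ℕ) :=
  D₁ ∪ D₂ ∪ @Finset.filter _ (fun d => GDiag V d) (Classical.decPred _) {(a, j), (j, b)}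

lemma mem_glue {V : Finset ℕ} {a b j : ℕ} {D₁ D₂ : Finset (ℕ × ℕ)} {d : ℕ × ℕ} :
    d ∈ glue V a b j D₁ D₂ ↔
      d ∈ D₁ ∨ d ∈ D₂ ∨ ((d = (a, j) ∨ d = (j, b)) ∧ GDiag V d) := by
  simp only [glue, Finset.mem_union, Finset.mem_filter, Finset.mem_insert,
    Finset.mem_singleton, or_assoc]

lemma gdiag_aj {V : Finset ℕ} {a b j : ℕ} (ha : a ∈ V) (hb : b ∈ V) (hjV : j ∈ V)
    (hjb : j < b) {c : ℕ} (hcV : c ∈ V) (h1 : a < c) (h2 : c < j) : GDiag V (a, j) :=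
  ⟨ha, hjV, ⟨c, hcV, h1, h2⟩, ⟨b, hb, Or.inr hjb⟩⟩

lemma gdiag_jb {V : Finset ℕ} {a b j : ℕ} (ha : a ∈ V) (hb : b ∈ V) (hjV : j ∈ V)
    (hja : a < j) {c : ℕ} (hcV : c ∈ V) (h1 : j < c) (h2 : c < b) : GDiag V (j, b) :=
  ⟨hjV, hb, ⟨c, hcV, h1, h2⟩, ⟨a, ha, Or.inl hja⟩⟩

lemma gtri_glue {V : Finset ℕ} {D₁ D₂ : Finset (ℕ × ℕ)} {a b j : ℕ}
    (ha : a ∈ V) (haM : ∀ x ∈ V, a ≤ x) (hb : b ∈ V) (hbM : ∀ x ∈ V, x ≤ b)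
    (hjV : j ∈ V) (hja : a < j) (hjb : j < b)
    (h1 : GTri (V.filter (· ≤ j)) D₁) (h2 : GTri (V.filter (j ≤ ·)) D₂) :
    GTri V (glue V a b j D₁ D₂) := by
  -- facts about members
  have f1 : ∀ d ∈ D₁, GDiag V d ∧ a ≤ d.1 ∧ d.2 ≤ j := by
    intro d hd
    obtain ⟨hg, hj2, -⟩ := gdiag_up_left (h1.1 d hd) haM hb hjb
    exact ⟨hg, haM _ hg.1, hj2⟩
  have f2 : ∀ d ∈ D₂, GDiag V d ∧ j ≤ d.1 ∧ d.2 ≤ b := by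
    intro d hd
    obtain ⟨hg, hj1, -⟩ := gdiag_up_right (h2.1 d hd) hbM ha hja
    exact ⟨hg, hj1, hbM _ hg.2.1⟩
  refine ⟨?_, ?_, ?_⟩
  · intro d hd
    rcases mem_glue.1 hd with h | h | h
    · exact (f1 d h).1
    · exact (f2 d h).1
    · exact h.2
  · -- pairwise non-crossing
    intro d hd e he
    rcases mem_glue.1 hd with hd' | hd' | ⟨hd' | hd', hdg⟩ <;>
      rcases mem_glue.1 he with he' | he' | ⟨he' | he', heg⟩
    · exact h1.2.1 d hd' e he'
    · exact (not_crosses_sep (le_trans (f1 d hd').2.2 (f2 e he').2.1)).1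
    · subst he'; exact (not_crosses_nested (f1 d hd').2.1 (f1 d hd').2.2).1
    · subst he'; exact (not_crosses_sep (f1 d hd').2.2).1
    · exact (not_crosses_sep (le_trans (f1 e he').2.2 (f2 d hd').2.1)).2
    · exact h2.2.1 d hd' e he'
    · subst he'; exact (not_crosses_sep (f2 d hd').2.1).2
    · subst he'; exact (not_crosses_nested (f2 d hd').2.1 (f2 d hd').2.2).1
    · subst hd'; exact (not_crosses_nested (f1 e he').2.1 (f1 e he').2.2).2
    · subst hd'; exact (not_crosses_sep (f2 e he').2.1).1
    · subst hd'; subst he'; exact not_crosses_self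
    · subst hd'; subst he'; exact (not_crosses_sep (le_refl j)).1
    · subst hd'; exact (not_crosses_sep (f1 e he').2.2).2
    · subst hd'; exact (not_crosses_nested (f2 e he').2.1 (f2 e he').2.2).2
    · subst hd'; subst he'; exact (not_crosses_sep (le_refl j)).2
    · subst hd'; subst he'; exact not_crosses_self
  · -- maximality
    intro d hgd hnc
    by_cases hd2 : d.2 ≤ j
    · by_cases hne : d.1 = a ∧ d.2 = j
      · exact mem_glue.2 (Or.inr (Or.inr ⟨Or.inl (Prod.ext_iff.2 hne), hgd⟩))
      · refine mem_glue.2 (Or.inl (h1.2.2 d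
          (gdiag_down_left hgd ha haM hjV (le_of_lt hja) hd2 hne) ?_))
        intro e he
        exact hnc e (mem_glue.2 (Or.inl he))
    · by_cases hd1 : j ≤ d.1
      · by_cases hne : d.1 = j ∧ d.2 = b
        · exact mem_glue.2 (Or.inr (Or.inr ⟨Or.inr (Prod.ext_iff.2 hne), hgd⟩))
        · refine mem_glue.2 (Or.inr (Or.inl (h2.2.2 d
            (gdiag_down_right hgd hb hbM hjV (le_of_lt hjb) hd1 hne) ?_)))
          intro e he
          exact hnc e (mem_glue.2 (Or.inr (Or.inl he)))
      · -- d.1 < j < d.2 : contradiction with hnc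
        exfalso
        push_neg at hd2 hd1
        by_cases hda : d.1 = a
        · have hd2b : d.2 < b := by
            obtain ⟨hx1, hx2, -, x, hxV, hx⟩ := hgd
            have h1x := haM x hxV
            have h2x := hbM x hxV
            omega
          have hjbg : GDiag V (j, b) := gdiag_jb ha hb hjV hja hgd.2.1 hd2 hd2b
          refine hnc (j, b) (mem_glue.2 (Or.inr (Or.inr ⟨Or.inr rfl, hjbg⟩))) ?_
          exact Or.inl ⟨by omega, hd2, hd2b⟩
        · have hda' : a < d.1 := lt_of_le_of_ne (haM _ hgd.1) (Ne.symm hda)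
          have hajg : GDiag V (a, j) := gdiag_aj ha hb hjV hjb hgd.1 hda' hd1
          refine hnc (a, j) (mem_glue.2 (Or.inr (Or.inr ⟨Or.inl rfl, hajg⟩))) ?_
          exact Or.inr ⟨hda', hd1, hd2⟩

lemma apex_glue {V : Finset ℕ} {D₁ D₂ : Finset (ℕ × ℕ)} {a b j : ℕ}
    (ha : a ∈ V) (hb : b ∈ V) (hjV : j ∈ V) (hja : a < j) (hjb : j < b) :
    ApexAt V (glue V a b j D₁ D₂) a b j := by
  refine ⟨hjV, hja, hjb, ?_, ?_⟩
  · by_cases h : ∃ c ∈ V, a < c ∧ c < j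
    · obtain ⟨c, hcV, hc1, hc2⟩ := h
      exact Or.inl (mem_glue.2 (Or.inr (Or.inr ⟨Or.inl rfl,
        gdiag_aj ha hb hjV hjb hcV hc1 hc2⟩)))
    · exact Or.inr h
  · by_cases h : ∃ c ∈ V, j < c ∧ c < b
    · obtain ⟨c, hcV, hc1, hc2⟩ := h
      exact Or.inl (mem_glue.2 (Or.inr (Or.inr ⟨Or.inr rfl,
        gdiag_jb ha hb hjV hja hcV hc1 hc2⟩)))
    · exact Or.inr h

lemma glue_split {V : Finset ℕ} {D : Finset (ℕ × ℕ)} {a b j : ℕ} (hD : GTri V D)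
    (haM : ∀ x ∈ V, a ≤ x) (hbM : ∀ x ∈ V, x ≤ b) (hap : ApexAt V D a b j) :
    glue V a b j (D.filter (fun d => d.2 ≤ j ∧ ¬(d.1 = a ∧ d.2 = j)))
      (D.filter (fun d => j ≤ d.1 ∧ ¬(d.1 = j ∧ d.2 = b))) = D := by
  classical
  ext d
  rw [mem_glue, Finset.mem_filter, Finset.mem_filter]
  constructor
  · rintro (⟨h, -⟩ | ⟨h, -⟩ | ⟨hd | hd, hg⟩)
    · exact h
    · exact h
    · subst hd
      rcases hap.2.2.2.1 with h | h
      · exact h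
      · exact absurd hg.2.2.1 h
    · subst hd
      rcases hap.2.2.2.2 with h | h
      · exact h
      · exact absurd hg.2.2.1 h
  · intro hd
    rcases split_sides hD haM hbM hap hd with h | h
    · by_cases hne : d.1 = a ∧ d.2 = j
      · exact Or.inr (Or.inr ⟨Or.inl (Prod.ext_iff.2 hne), hD.1 d hd⟩)
      · exact Or.inl ⟨hd, h, hne⟩
    · by_cases hne : d.1 = j ∧ d.2 = b
      · exact Or.inr (Or.inr ⟨Or.inr (Prod.ext_iff.2 hne), hD.1 d hd⟩)
      · exact Or.inr (Or.inl ⟨hd, h, hne⟩)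

lemma split_glue_left {V : Finset ℕ} {D₁ D₂ : Finset (ℕ × ℕ)} {a b j : ℕ}
    (ha : a ∈ V) (haM : ∀ x ∈ V, a ≤ x) (hb : b ∈ V) (hbM : ∀ x ∈ V, x ≤ b)
    (hja : a < j) (hjb : j < b)
    (h1 : GTri (V.filter (· ≤ j)) D₁) (h2 : GTri (V.filter (j ≤ ·)) D₂) :
    (glue V a b j D₁ D₂).filter (fun d => d.2 ≤ j ∧ ¬(d.1 = a ∧ d.2 = j)) = D₁ := by
  classical
  ext d
  rw [Finset.mem_filter, mem_glue]
  constructor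
  · rintro ⟨h | h | ⟨hd | hd, hg⟩, hp⟩
    · exact h
    · exfalso
      obtain ⟨hgV, hj1, -⟩ := gdiag_up_right (h2.1 d h) hbM ha hja
      have := hgV.lt
      omega
    · subst hd; exact absurd ⟨rfl, rfl⟩ hp.2
    · subst hd
      exfalso
      have hbj : b ≤ j := hp.1
      omega
  · intro hd
    obtain ⟨hg, hj2, hne⟩ := gdiag_up_left (h1.1 d hd) haM hb hjb
    exact ⟨Or.inl hd, hj2, hne⟩

lemma split_glue_right {V : Finset ℕ} {D₁ D₂ : Finset (ℕ × ℕ)} {a b j : ℕ}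
    (ha : a ∈ V) (haM : ∀ x ∈ V, a ≤ x) (hb : b ∈ V) (hbM : ∀ x ∈ V, x ≤ b)
    (hja : a < j) (hjb : j < b)
    (h1 : GTri (V.filter (· ≤ j)) D₁) (h2 : GTri (V.filter (j ≤ ·)) D₂) :
    (glue V a b j D₁ D₂).filter (fun d => j ≤ d.1 ∧ ¬(d.1 = j ∧ d.2 = b)) = D₂ := by
  classical
  ext d
  rw [Finset.mem_filter, mem_glue]
  constructor
  · rintro ⟨h | h | ⟨hd | hd, hg⟩, hp⟩
    · exfalso
      obtain ⟨hgV, hj2, -⟩ := gdiag_up_left (h1.1 d h) haM hb hjb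
      have := hgV.lt
      omega
    · exact h
    · subst hd
      exfalso
      have haj : j ≤ a := hp.1
      omega
    · subst hd; exact absurd ⟨rfl, rfl⟩ hp.2
  · intro hd
    obtain ⟨hg, hj1, hne⟩ := gdiag_up_right (h2.1 d hd) hbM ha hja
    exact ⟨Or.inr (Or.inl hd), hj1, hne⟩

lemma card_fiber {V : Finset ℕ} {a b j : ℕ} (ha : a ∈ V) (haM : ∀ x ∈ V, a ≤ x)
    (hb : b ∈ V) (hbM : ∀ x ∈ V, x ≤ b) (hjV : j ∈ V) (hja : a < j) (hjb : j < b) :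
    (@Finset.filter _ (fun D => ApexAt V D a b j) (Classical.decPred _) (tris V)).card
      = (tris (V.filter (· ≤ j))).card * (tris (V.filter (j ≤ ·))).card := by
  classical
  rw [← Finset.card_product]
  apply Finset.card_bij'
    (i := fun D _ => (D.filter (fun d => d.2 ≤ j ∧ ¬(d.1 = a ∧ d.2 = j)),
      D.filter (fun d => j ≤ d.1 ∧ ¬(d.1 = j ∧ d.2 = b))))
    (j := fun p _ => glue V a b j p.1 p.2)
  · intro D hD
    rw [Finset.mem_filter] at hD
    obtain ⟨hDt, hap⟩ := hD
    rw [mem_tris] at hDt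
    rw [Finset.mem_product]
    exact ⟨mem_tris.2 (gtri_left hDt ha haM hb hbM hap),
      mem_tris.2 (gtri_right hDt ha haM hb hbM hap)⟩
  · intro p hp
    rw [Finset.mem_product] at hp
    rw [Finset.mem_filter]
    exact ⟨mem_tris.2 (gtri_glue ha haM hb hbM hjV hja hjb
        (mem_tris.1 hp.1) (mem_tris.1 hp.2)),
      apex_glue ha hb hjV hja hjb⟩
  · intro D hD
    rw [Finset.mem_filter] at hD
    exact glue_split (mem_tris.1 hD.1) haM hbM hD.2
  · intro p hp
    rw [Finset.mem_product] at hp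
    have h1 := mem_tris.1 hp.1
    have h2 := mem_tris.1 hp.2
    rw [split_glue_left ha haM hb hbM hja hjb h1 h2,
      split_glue_right ha haM hb hbM hja hjb h1 h2]

lemma three_le_card_of_gdiag {V : Finset ℕ} {d : ℕ × ℕ} (h : GDiag V d) : 3 ≤ V.card := by
  obtain ⟨h1, h2, ⟨c, hc, hc1, hc2⟩, -⟩ := h
  have hsub : ({d.1, c, d.2} : Finset ℕ) ⊆ V := by
    intro x hx
    simp only [Finset.mem_insert, Finset.mem_singleton] at hx
    rcases hx with rfl | rfl | rfl <;> assumption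
  have hcard : ({d.1, c, d.2} : Finset ℕ).card = 3 := by
    rw [Finset.card_insert_of_notMem (by simp; omega),
      Finset.card_insert_of_notMem (by simp; omega), Finset.card_singleton]
  have := Finset.card_le_card hsub
  omega

lemma tris_no_diag {V : Finset ℕ} (h : ∀ d, ¬ GDiag V d) : tris V = {∅} := by
  ext D
  rw [mem_tris, Finset.mem_singleton]
  constructor
  · intro hD
    apply Finset.eq_empty_of_forall_notMem
    intro d hd
    exact h d (hD.1 d hd)
  · rintro rfl
    exact ⟨fun d hd => absurd hd (Finset.notMem_empty d),
      fun d hd => absurd hd (Finset.notMem_empty d),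
      fun d hd _ => absurd hd (h d)⟩

theorem tris_card (V : Finset ℕ) : (tris V).card = catalan (V.card - 2) := by
  classical
  induction V using Finset.strongInductionOn with
  | _ V ih => ?_
  by_cases hsmall : V.card ≤ 2
  · have hnd : ∀ d, ¬ GDiag V d := fun d hd => by
      have := three_le_card_of_gdiag hd; omega
    rw [tris_no_diag hnd]
    have h0 : V.card - 2 = 0 := by omega
    rw [h0, catalan_zero, Finset.card_singleton]
  · push_neg at hsmall
    have hne : V.Nonempty := Finset.card_pos.1 (by omega)
    set a := V.min' hne with haDef
    set b := V.max' hne with hbDef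
    have ha : a ∈ V := V.min'_mem hne
    have hb : b ∈ V := V.max'_mem hne
    have haM : ∀ x ∈ V, a ≤ x := fun x hx => V.min'_le x hx
    have hbM : ∀ x ∈ V, x ≤ b := fun x hx => V.le_max' x hx
    have hab : a < b := V.min'_lt_max'_of_card (by omega)
    set I := V.filter (fun x => a < x ∧ x < b) with hI
    have hIV : ∀ j ∈ I, j ∈ V ∧ a < j ∧ j < b := fun j hj => by
      have := Finset.mem_filter.1 hj
      exact ⟨this.1, this.2.1, this.2.2⟩
    have hIcard : I.card = V.card - 2 := by
      have hIe : I = V \ {a, b} := by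
        ext x
        simp only [hI, Finset.mem_filter, Finset.mem_sdiff, Finset.mem_insert,
          Finset.mem_singleton]
        constructor
        · rintro ⟨hx, h1, h2⟩
          exact ⟨hx, by omega⟩
        · rintro ⟨hx, hne2⟩
          push_neg at hne2
          exact ⟨hx, lt_of_le_of_ne (haM x hx) (fun h => hne2.1 h.symm),
            lt_of_le_of_ne (hbM x hx) hne2.2⟩
      have hsub : ({a, b} : Finset ℕ) ⊆ V := by
        intro x hx
        simp only [Finset.mem_insert, Finset.mem_singleton] at hx
        rcases hx with rfl | rfl <;> assumption
      have hpair : ({a, b} : Finset ℕ).card = 2 := by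
        rw [Finset.card_insert_of_notMem (by simp; omega), Finset.card_singleton]
      rw [hIe, Finset.card_sdiff_of_subset hsub, hpair]
    have hImem : I.Nonempty := Finset.card_pos.1 (by omega)
    have hpart : tris V = I.biUnion (fun j =>
        @Finset.filter _ (fun D => ApexAt V D a b j) (Classical.decPred _) (tris V)) := by
      ext D
      simp only [Finset.mem_biUnion, Finset.mem_filter]
      constructor
      · intro hD
        have hDt := mem_tris.1 hD
        obtain ⟨j, hap⟩ := exists_apex hDt ha haM hb hbM (by
          obtain ⟨j₀, hj₀⟩ := hImem
          obtain ⟨h1, h2⟩ := Finset.mem_filter.1 hj₀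
          exact ⟨j₀, h1, h2.1, h2.2⟩)
        exact ⟨j, Finset.mem_filter.2 ⟨hap.1, hap.2.1, hap.2.2.1⟩, hD, hap⟩
      · rintro ⟨j, -, hD, -⟩
        exact hD
    rw [hpart, Finset.card_biUnion (by
      intro x hx y hy hxy
      rw [Function.onFun, Finset.disjoint_left]
      intro D hDx hDy
      obtain ⟨hD1, hap1⟩ := Finset.mem_filter.1 hDx
      obtain ⟨hD2, hap2⟩ := Finset.mem_filter.1 hDy
      exact hxy (apex_unique (mem_tris.1 hD1) haM hap1 hap2))]
    have hkey : ∀ j ∈ I, 2 ≤ (V.filter (· ≤ j)).card ∧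
        (V.filter (· ≤ j)).card ≤ V.card - 1 ∧
        (V.filter (· ≤ j)).card + (V.filter (j ≤ ·)).card = V.card + 1 := by
      intro j hj
      obtain ⟨hjV, hja, hjb⟩ := hIV j hj
      refine ⟨?_, ?_, ?_⟩
      · have hsub : ({a, j} : Finset ℕ) ⊆ V.filter (· ≤ j) := by
          intro x hx
          simp only [Finset.mem_insert, Finset.mem_singleton] at hx
          rcases hx with rfl | rfl
          · exact Finset.mem_filter.2 ⟨ha, le_of_lt hja⟩
          · exact Finset.mem_filter.2 ⟨hjV, le_refl _⟩
        have h2 : ({a, j} : Finset ℕ).card = 2 := by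
          rw [Finset.card_insert_of_notMem (by simp; omega), Finset.card_singleton]
        have := Finset.card_le_card hsub
        omega
      · have hsub : V.filter (· ≤ j) ⊆ V.erase b := by
          intro x hx
          rw [Finset.mem_filter] at hx
          exact Finset.mem_erase.2 ⟨by omega, hx.1⟩
        have := Finset.card_le_card hsub
        rw [Finset.card_erase_of_mem hb] at this
        exact this
      · have hu : V.filter (· ≤ j) ∪ V.filter (j ≤ ·) = V := by
          ext x
          simp only [Finset.mem_union, Finset.mem_filter]
          constructor
          · rintro (⟨h, -⟩ | ⟨h, -⟩) <;> exact h
          · intro hx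
            rcases le_total x j with h | h
            · exact Or.inl ⟨hx, h⟩
            · exact Or.inr ⟨hx, h⟩
        have hi : V.filter (· ≤ j) ∩ V.filter (j ≤ ·) = {j} := by
          ext x
          simp only [Finset.mem_inter, Finset.mem_filter, Finset.mem_singleton]
          constructor
          · rintro ⟨⟨-, h1⟩, ⟨-, h2⟩⟩
            omega
          · rintro rfl
            exact ⟨⟨hjV, le_refl _⟩, ⟨hjV, le_refl _⟩⟩
        have := Finset.card_union_add_card_inter (V.filter (· ≤ j)) (V.filter (j ≤ ·))
        rw [hu, hi, Finset.card_singleton] at this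
        omega
    have hfib : ∀ j ∈ I,
        (@Finset.filter _ (fun D => ApexAt V D a b j) (Classical.decPred _) (tris V)).card
          = catalan ((V.filter (· ≤ j)).card - 2) * catalan ((V.filter (j ≤ ·)).card - 2) := by
      intro j hj
      obtain ⟨hjV, hja, hjb⟩ := hIV j hj
      have hss1 : V.filter (· ≤ j) ⊂ V :=
        (Finset.ssubset_iff_of_subset (Finset.filter_subset _ _)).2
          ⟨b, hb, by rw [Finset.mem_filter]; push_neg; intro _; omega⟩
      have hss2 : V.filter (j ≤ ·) ⊂ V :=
        (Finset.ssubset_iff_of_subset (Finset.filter_subset _ _)).2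
          ⟨a, ha, by rw [Finset.mem_filter]; push_neg; intro _; omega⟩
      rw [card_fiber ha haM hb hbM hjV hja hjb, ih _ hss1, ih _ hss2]
    rw [Finset.sum_congr rfl hfib]
    set g : ℕ → ℕ := fun j => (V.filter (· ≤ j)).card - 2 with hg
    have hmono : ∀ x ∈ I, ∀ y ∈ I, x < y → g x < g y := by
      intro x hx y hy hxy
      have h2 := (hkey x hx).1
      have hss : V.filter (· ≤ x) ⊂ V.filter (· ≤ y) := by
        refine (Finset.ssubset_iff_of_subset (fun z hz => ?_)).2
          ⟨y, Finset.mem_filter.2 ⟨(hIV y hy).1, le_refl y⟩,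
            by rw [Finset.mem_filter]; push_neg; intro _; omega⟩
        rw [Finset.mem_filter] at hz ⊢
        exact ⟨hz.1, by omega⟩
      have := Finset.card_lt_card hss
      simp only [hg]
      omega
    have hginj : Set.InjOn g I := by
      intro x hx y hy hxy
      rcases lt_trichotomy x y with h | h | h
      · exact absurd hxy (by have := hmono x hx y hy h; omega)
      · exact h
      · exact absurd hxy (by have := hmono y hy x hx h; omega)
    have himg : I.image g = Finset.range (V.card - 2) := by
      apply Finset.eq_of_subset_of_card_le
      · intro t ht
        obtain ⟨j, hj, rfl⟩ := Finset.mem_image.1 ht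
        rw [Finset.mem_range]
        have := hkey j hj
        simp only [hg]
        omega
      · rw [Finset.card_range, Finset.card_image_of_injOn hginj, hIcard]
    have hterm : ∀ j ∈ I,
        catalan ((V.filter (· ≤ j)).card - 2) * catalan ((V.filter (j ≤ ·)).card - 2)
          = catalan (g j) * catalan (V.card - 3 - g j) := by
      intro j hj
      have := hkey j hj
      congr 2
      simp only [hg]
      omega
    rw [Finset.sum_congr rfl hterm]
    have hsi : ∑ t ∈ Finset.image g I, catalan t * catalan (V.card - 3 - t)
        = ∑ j ∈ I, catalan (g j) * catalan (V.card - 3 - g j) :=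
      Finset.sum_image (fun x hx y hy h => hginj hx hy h)
    rw [← hsi, himg]
    have hs := catalan_succ (V.card - 3)
    rw [Fin.sum_univ_eq_sum_range (fun i => catalan i * catalan (V.card - 3 - i))] at hs
    rw [show (V.card - 3).succ = V.card - 2 by omega,
      show V.card - 3 + 1 = V.card - 2 by omega] at hs
    exact hs.symm

lemma mem_filterC {α : Type*} {p : α → Prop} {s : Finset α} {x : α} :
    x ∈ @Finset.filter α p (Classical.decPred p) s ↔ x ∈ s ∧ p x :=
  @Finset.mem_filter α p (Classical.decPred p) s x

lemma card_ear_peel {V : Finset ℕ} {k : ℕ} {e : ℕ × ℕ} {F : Finset (ℕ × ℕ)}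
    (H1 : GDiag V e)
    (H2 : ∀ d, GDiag (V.erase k) d ↔ GDiag V d ∧ d.1 ≠ k ∧ d.2 ≠ k ∧ d ≠ e)
    (H3 : ∀ d, GDiag V d → (d.1 = k ∨ d.2 = k) → Crosses d e)
    (H4 : ∀ d, GDiag V d → d.1 ≠ k → d.2 ≠ k → d ≠ e → ¬Crosses d e ∧ ¬Crosses e d)
    (HF : ∀ f ∈ F, f ≠ e) :
    (@Finset.filter _ (fun D => e ∈ D ∧ ∀ f ∈ F, f ∈ D) (Classical.decPred _)
        (tris V)).card
      = (@Finset.filter _ (fun D => ∀ f ∈ F, f ∈ D) (Classical.decPred _)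
        (tris (V.erase k))).card := by
  classical
  refine Finset.card_bij' (fun D _ => D.erase e) (fun D _ => insert e D) ?_ ?_ ?_ ?_
  · intro D hD
    obtain ⟨hDt, heD, hFD⟩ := mem_filterC.1 hD
    have hD' := mem_tris.1 hDt
    rw [mem_filterC]
    refine ⟨mem_tris.2 ⟨?_, ?_, ?_⟩, fun f hf => Finset.mem_erase.2 ⟨HF f hf, hFD f hf⟩⟩
    · intro d hd
      obtain ⟨hde, hdD⟩ := Finset.mem_erase.1 hd
      have hg := hD'.1 d hdD
      refine (H2 d).2 ⟨hg, ?_, ?_, hde⟩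
      · intro h1
        exact hD'.2.1 d hdD e heD (H3 d hg (Or.inl h1))
      · intro h2
        exact hD'.2.1 d hdD e heD (H3 d hg (Or.inr h2))
    · intro d hd f hf
      exact hD'.2.1 d (Finset.mem_erase.1 hd).2 f (Finset.mem_erase.1 hf).2
    · intro d hgd hnc
      obtain ⟨hg, h1, h2, hde⟩ := (H2 d).1 hgd
      have hdD : d ∈ D := by
        apply hD'.2.2 d hg
        intro f hf
        by_cases hfe : f = e
        · subst hfe
          exact (H4 d hg h1 h2 hde).1
        · exact hnc f (Finset.mem_erase.2 ⟨hfe, hf⟩)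
      exact Finset.mem_erase.2 ⟨hde, hdD⟩
  · intro D hD
    obtain ⟨hDt, hFD⟩ := mem_filterC.1 hD
    have hD' := mem_tris.1 hDt
    have hprop : ∀ d ∈ D, GDiag V d ∧ d.1 ≠ k ∧ d.2 ≠ k ∧ d ≠ e :=
      fun d hd => (H2 d).1 (hD'.1 d hd)
    rw [mem_filterC]
    refine ⟨mem_tris.2 ⟨?_, ?_, ?_⟩, Finset.mem_insert_self e D,
      fun f hf => Finset.mem_insert.2 (Or.inr (hFD f hf))⟩
    · intro d hd
      rcases Finset.mem_insert.1 hd with rfl | hd'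
      · exact H1
      · exact (hprop d hd').1
    · intro d hd f hf
      rcases Finset.mem_insert.1 hd with rfl | hd' <;>
        rcases Finset.mem_insert.1 hf with rfl | hf'
      · exact not_crosses_self
      · obtain ⟨hg, h1, h2, hde⟩ := hprop f hf'
        exact (H4 f hg h1 h2 hde).2
      · obtain ⟨hg, h1, h2, hde⟩ := hprop d hd'
        exact (H4 d hg h1 h2 hde).1
      · exact hD'.2.1 d hd' f hf'
    · intro d hgd hnc
      by_cases hde : d = e
      · exact Finset.mem_insert.2 (Or.inl hde)
      · by_cases hk : d.1 = k ∨ d.2 = k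
        · exact absurd (H3 d hgd hk) (hnc e (Finset.mem_insert_self e D))
        · push_neg at hk
          refine Finset.mem_insert.2 (Or.inr (hD'.2.2 d ((H2 d).2 ⟨hgd, hk.1, hk.2, hde⟩) ?_))
          intro f hf
          exact hnc f (Finset.mem_insert.2 (Or.inr hf))
  · intro D hD
    exact Finset.insert_erase (mem_filterC.1 hD).2.1
  · intro D hD
    apply Finset.erase_insert
    intro heD
    have := ((H2 e).1 ((mem_tris.1 (mem_filterC.1 hD).1).1 e heD)).2.2.2
    exact this rfl

lemma crosses_mk {a b c d : ℕ} :
    Crosses (a, b) (c, d) ↔ (a < c ∧ c < b ∧ b < d) ∨ (c < a ∧ a < d ∧ d < b) :=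
  Iff.rfl

lemma ear_facts_int {V : Finset ℕ} {p k s : ℕ} (hp : p ∈ V) (hk : k ∈ V) (hs : s ∈ V)
    (hpk : p < k) (hks : k < s) (hbet : ∀ x ∈ V, p < x → x < s → x = k)
    (hout : ∃ x ∈ V, x < p ∨ s < x) :
    GDiag V (p, s)
    ∧ (∀ d, GDiag (V.erase k) d ↔ GDiag V d ∧ d.1 ≠ k ∧ d.2 ≠ k ∧ d ≠ (p, s))
    ∧ (∀ d, GDiag V d → (d.1 = k ∨ d.2 = k) → Crosses d (p, s))
    ∧ (∀ d, GDiag V d → d.1 ≠ k → d.2 ≠ k → d ≠ (p, s) →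
        ¬Crosses d (p, s) ∧ ¬Crosses (p, s) d) := by
  refine ⟨⟨hp, hs, ⟨k, hk, hpk, hks⟩, hout⟩, ?_, ?_, ?_⟩
  · rintro ⟨d1, d2⟩
    constructor
    · rintro ⟨h1, h2, ⟨c, hcV, hc1, hc2⟩, ⟨x, hxV, hx⟩⟩
      obtain ⟨h1k, h1V⟩ := Finset.mem_erase.1 h1
      obtain ⟨h2k, h2V⟩ := Finset.mem_erase.1 h2
      obtain ⟨hck, hcV'⟩ := Finset.mem_erase.1 hcV
      obtain ⟨hxk, hxV'⟩ := Finset.mem_erase.1 hxV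
      refine ⟨⟨h1V, h2V, ⟨c, hcV', hc1, hc2⟩, ⟨x, hxV', hx⟩⟩, h1k, h2k, ?_⟩
      rintro heq
      rw [Prod.mk.injEq] at heq
      exact hck (hbet c hcV' (by omega) (by omega))
    · rintro ⟨⟨h1, h2, ⟨c, hcV, hc1, hc2⟩, ⟨x, hxV, hx⟩⟩, hk1, hk2, hne⟩
      rw [Ne, Prod.mk.injEq, not_and] at hne
      refine ⟨Finset.mem_erase.2 ⟨hk1, h1⟩, Finset.mem_erase.2 ⟨hk2, h2⟩, ?_, ?_⟩
      · by_cases hck : c = k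
        · subst hck
          by_cases hd1p : d1 < p
          · exact ⟨p, Finset.mem_erase.2 ⟨by omega, hp⟩, hd1p, by omega⟩
          · by_cases hd1p' : d1 = p
            · have hd2s : ¬(d2 < s) := fun hh => hk2 (hbet d2 h2 (by omega) hh)
              have hd2s' : d2 ≠ s := fun hh => (hne hd1p') hh
              exact ⟨s, Finset.mem_erase.2 ⟨by omega, hs⟩, by omega, by omega⟩
            · exact absurd (hbet d1 h1 (by omega) (by omega)) hk1
        · exact ⟨c, Finset.mem_erase.2 ⟨hck, hcV⟩, hc1, hc2⟩
      · by_cases hxk : x = k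
        · subst hxk
          rcases hx with h | h
          · exact ⟨p, Finset.mem_erase.2 ⟨by omega, hp⟩, Or.inl (by omega)⟩
          · exact ⟨s, Finset.mem_erase.2 ⟨by omega, hs⟩, Or.inr (by omega)⟩
        · exact ⟨x, Finset.mem_erase.2 ⟨hxk, hxV⟩, hx⟩
  · rintro ⟨d1, d2⟩ ⟨h1, h2, ⟨c, hcV, hc1, hc2⟩, ⟨x, hxV, hx⟩⟩ hor
    rcases hor with hd1 | hd2
    · -- d1 = k, so s < d2
      have hd1k : d1 = k := hd1
      subst hd1k
      have hd2s : ¬(d2 < s) := fun hh => by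
        have := hbet d2 h2 (by omega) hh
        omega
      have hd2s' : d2 ≠ s := fun hh => by
        subst hh
        exact absurd (hbet c hcV (by omega) (by omega)) (by omega)
      exact Or.inr ⟨hpk, hks, by omega⟩
    · have hd2k : d2 = k := hd2
      subst hd2k
      have hd1p : ¬(p < d1) := fun hh => by
        have := hbet d1 h1 hh (by omega)
        omega
      have hd1p' : d1 ≠ p := fun hh => by
        subst hh
        exact absurd (hbet c hcV (by omega) (by omega)) (by omega)
      exact Or.inl ⟨by omega, hpk, hks⟩
  · rintro ⟨d1, d2⟩ ⟨h1, h2, ⟨c, hcV, hc1, hc2⟩, ⟨x, hxV, hx⟩⟩ hk1 hk2 hne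
    have w1 : ¬(p < d1 ∧ d1 < s) := fun ⟨u, v⟩ => hk1 (hbet d1 h1 u v)
    have w2 : ¬(p < d2 ∧ d2 < s) := fun ⟨u, v⟩ => hk2 (hbet d2 h2 u v)
    rw [crosses_mk, crosses_mk]
    omega

lemma ear_facts_min {V : Finset ℕ} {k s b : ℕ} (hk : k ∈ V) (hs : s ∈ V) (hb : b ∈ V)
    (hks : k < s) (hkM : ∀ x ∈ V, k ≤ x) (hbM : ∀ x ∈ V, x ≤ b)
    (hsucc : ∀ x ∈ V, k < x → s ≤ x) (hmid : ∃ c ∈ V, s < c ∧ c < b) :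
    GDiag V (s, b)
    ∧ (∀ d, GDiag (V.erase k) d ↔ GDiag V d ∧ d.1 ≠ k ∧ d.2 ≠ k ∧ d ≠ (s, b))
    ∧ (∀ d, GDiag V d → (d.1 = k ∨ d.2 = k) → Crosses d (s, b))
    ∧ (∀ d, GDiag V d → d.1 ≠ k → d.2 ≠ k → d ≠ (s, b) →
        ¬Crosses d (s, b) ∧ ¬Crosses (s, b) d) := by
  refine ⟨⟨hs, hb, hmid, ⟨k, hk, Or.inl hks⟩⟩, ?_, ?_, ?_⟩
  · rintro ⟨d1, d2⟩
    constructor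
    · rintro ⟨h1, h2, ⟨c, hcV, hc1, hc2⟩, ⟨x, hxV, hx⟩⟩
      obtain ⟨h1k, h1V⟩ := Finset.mem_erase.1 h1
      obtain ⟨h2k, h2V⟩ := Finset.mem_erase.1 h2
      obtain ⟨hck, hcV'⟩ := Finset.mem_erase.1 hcV
      obtain ⟨hxk, hxV'⟩ := Finset.mem_erase.1 hxV
      refine ⟨⟨h1V, h2V, ⟨c, hcV', hc1, hc2⟩, ⟨x, hxV', hx⟩⟩, h1k, h2k, ?_⟩
      rintro heq
      rw [Prod.mk.injEq] at heq
      have hxb := hbM x hxV'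
      have hxk' := hkM x hxV'
      have := hsucc x hxV' (by omega)
      omega
    · rintro ⟨⟨h1, h2, ⟨c, hcV, hc1, hc2⟩, ⟨x, hxV, hx⟩⟩, hk1, hk2, hne⟩
      rw [Ne, Prod.mk.injEq, not_and] at hne
      have hd1k : k < d1 := lt_of_le_of_ne (hkM _ h1) (Ne.symm hk1)
      refine ⟨Finset.mem_erase.2 ⟨hk1, h1⟩, Finset.mem_erase.2 ⟨hk2, h2⟩,
        ⟨c, Finset.mem_erase.2 ⟨by omega, hcV⟩, hc1, hc2⟩, ?_⟩
      by_cases hxk : x = k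
      · have hd2k : k ≤ d2 := hkM _ h2
        have hd1s : s ≤ d1 := hsucc _ h1 hd1k
        by_cases hsd1 : s < d1
        · exact ⟨s, Finset.mem_erase.2 ⟨by omega, hs⟩, Or.inl hsd1⟩
        · have hd1s' : d1 = s := by omega
          have hd2b : d2 ≠ b := fun hh => (hne hd1s') hh
          have hd2b' : d2 ≤ b := hbM _ h2
          exact ⟨b, Finset.mem_erase.2 ⟨by omega, hb⟩, Or.inr (by omega)⟩
      · exact ⟨x, Finset.mem_erase.2 ⟨hxk, hxV⟩, hx⟩
  · rintro ⟨d1, d2⟩ ⟨h1, h2, ⟨c, hcV, hc1, hc2⟩, ⟨x, hxV, hx⟩⟩ hor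
    have hd1V := hkM d1 h1
    rcases hor with hd1 | hd2
    · have hd1k : d1 = k := hd1
      subst hd1k
      have hcs : s ≤ c := hsucc c hcV (by omega)
      have hd2s : s ≤ d2 := by omega
      have hd2s' : d2 ≠ s := by omega
      have hd2b : d2 < b := by
        have hxk := hkM x hxV
        have hxb := hbM x hxV
        omega
      exact Or.inl ⟨hks, by omega, hd2b⟩
    · have hd2k : d2 = k := hd2
      exfalso
      have := hkM c hcV
      omega
  · rintro ⟨d1, d2⟩ ⟨h1, h2, ⟨c, hcV, hc1, hc2⟩, ⟨x, hxV, hx⟩⟩ hk1 hk2 hne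
    have hd1s : s ≤ d1 := hsucc _ h1 (lt_of_le_of_ne (hkM _ h1) (Ne.symm hk1))
    have hd2b : d2 ≤ b := hbM _ h2
    rw [crosses_mk, crosses_mk]
    omega

lemma ear_facts_max {V : Finset ℕ} {a p k : ℕ} (ha : a ∈ V) (hp : p ∈ V) (hk : k ∈ V)
    (hpk : p < k) (haM : ∀ x ∈ V, a ≤ x) (hkM : ∀ x ∈ V, x ≤ k)
    (hpred : ∀ x ∈ V, x < k → x ≤ p) (hmid : ∃ c ∈ V, a < c ∧ c < p) :
    GDiag V (a, p)
    ∧ (∀ d, GDiag (V.erase k) d ↔ GDiag V d ∧ d.1 ≠ k ∧ d.2 ≠ k ∧ d ≠ (a, p))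
    ∧ (∀ d, GDiag V d → (d.1 = k ∨ d.2 = k) → Crosses d (a, p))
    ∧ (∀ d, GDiag V d → d.1 ≠ k → d.2 ≠ k → d ≠ (a, p) →
        ¬Crosses d (a, p) ∧ ¬Crosses (a, p) d) := by
  have hap : a < p := by
    obtain ⟨c, hcV, h1, h2⟩ := hmid
    omega
  refine ⟨⟨ha, hp, hmid, ⟨k, hk, Or.inr hpk⟩⟩, ?_, ?_, ?_⟩
  · rintro ⟨d1, d2⟩
    constructor
    · rintro ⟨h1, h2, ⟨c, hcV, hc1, hc2⟩, ⟨x, hxV, hx⟩⟩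
      obtain ⟨h1k, h1V⟩ := Finset.mem_erase.1 h1
      obtain ⟨h2k, h2V⟩ := Finset.mem_erase.1 h2
      obtain ⟨hck, hcV'⟩ := Finset.mem_erase.1 hcV
      obtain ⟨hxk, hxV'⟩ := Finset.mem_erase.1 hxV
      refine ⟨⟨h1V, h2V, ⟨c, hcV', hc1, hc2⟩, ⟨x, hxV', hx⟩⟩, h1k, h2k, ?_⟩
      rintro heq
      rw [Prod.mk.injEq] at heq
      have hxa := haM x hxV'
      have hxk' := hkM x hxV'
      have := hpred x hxV' (by omega)
      omega
    · rintro ⟨⟨h1, h2, ⟨c, hcV, hc1, hc2⟩, ⟨x, hxV, hx⟩⟩, hk1, hk2, hne⟩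
      rw [Ne, Prod.mk.injEq, not_and] at hne
      have hd2k : d2 < k := lt_of_le_of_ne (hkM _ h2) hk2
      refine ⟨Finset.mem_erase.2 ⟨hk1, h1⟩, Finset.mem_erase.2 ⟨hk2, h2⟩,
        ⟨c, Finset.mem_erase.2 ⟨by omega, hcV⟩, hc1, hc2⟩, ?_⟩
      by_cases hxk : x = k
      · have hd1k : d1 < k := by omega
        have hd2p : d2 ≤ p := hpred _ h2 hd2k
        by_cases hd2p' : d2 < p
        · exact ⟨p, Finset.mem_erase.2 ⟨by omega, hp⟩, Or.inr hd2p'⟩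
        · have hd2p'' : d2 = p := by omega
          have hd1a : d1 ≠ a := fun hh => (hne hh) hd2p''
          have hd1a' : a ≤ d1 := haM _ h1
          exact ⟨a, Finset.mem_erase.2 ⟨by omega, ha⟩, Or.inl (by omega)⟩
      · exact ⟨x, Finset.mem_erase.2 ⟨hxk, hxV⟩, hx⟩
  · rintro ⟨d1, d2⟩ ⟨h1, h2, ⟨c, hcV, hc1, hc2⟩, ⟨x, hxV, hx⟩⟩ hor
    have hd2V := hkM d2 h2
    rcases hor with hd1 | hd2
    · have hd1k : d1 = k := hd1
      exfalso
      have := hkM c hcV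
      omega
    · have hd2k : d2 = k := hd2
      subst hd2k
      have hcp : c ≤ p := hpred c hcV (by omega)
      have hd1p : d1 ≤ p := by omega
      have hd1p' : d1 ≠ p := by omega
      have hd1a : a < d1 := by
        have hxa := haM x hxV
        have hxk := hkM x hxV
        have hd1a' := haM d1 h1
        omega
      exact Or.inr ⟨hd1a, by omega, hpk⟩
  · rintro ⟨d1, d2⟩ ⟨h1, h2, ⟨c, hcV, hc1, hc2⟩, ⟨x, hxV, hx⟩⟩ hk1 hk2 hne
    have hd2p : d2 ≤ p := hpred _ h2 (lt_of_le_of_ne (hkM _ h2) hk2)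
    have hd1a : a ≤ d1 := haM _ h1
    rw [crosses_mk, crosses_mk]
    omega

lemma exists_fourth {V : Finset ℕ} {x y z : ℕ} (h : 4 ≤ V.card) :
    ∃ c ∈ V, c ≠ x ∧ c ≠ y ∧ c ≠ z := by
  by_contra h'
  push_neg at h'
  have hsub : V ⊆ {x, y, z} := by
    intro c hc
    simp only [Finset.mem_insert, Finset.mem_singleton]
    by_cases hcx : c = x
    · exact Or.inl hcx
    · by_cases hcy : c = y
      · exact Or.inr (Or.inl hcy)
      · exact Or.inr (Or.inr (h' c hc hcx hcy))
  have hc1 := Finset.card_le_card hsub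
  have h1 := Finset.card_insert_le x ({y, z} : Finset ℕ)
  have h2 := Finset.card_insert_le y ({z} : Finset ℕ)
  have h3 : ({z} : Finset ℕ).card = 1 := Finset.card_singleton z
  omega

lemma ear_facts_range {m : ℕ} {K : Finset ℕ} (hK : K ⊆ Finset.range m)
    (hadj : ∀ j ∈ K, (j + 1) % m ∉ K) {T : Finset ℕ} (hT : T ⊆ K)
    {k : ℕ} (hkK : k ∈ K) (hkT : k ∉ T) (hm : 4 ≤ m - T.card) :
    GDiag (Finset.range m \ T) (earDiag m k)
    ∧ (∀ d, GDiag ((Finset.range m \ T).erase k) d ↔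
        GDiag (Finset.range m \ T) d ∧ d.1 ≠ k ∧ d.2 ≠ k ∧ d ≠ earDiag m k)
    ∧ (∀ d, GDiag (Finset.range m \ T) d → (d.1 = k ∨ d.2 = k) → Crosses d (earDiag m k))
    ∧ (∀ d, GDiag (Finset.range m \ T) d → d.1 ≠ k → d.2 ≠ k → d ≠ earDiag m k →
        ¬Crosses d (earDiag m k) ∧ ¬Crosses (earDiag m k) d) := by
  set V := Finset.range m \ T with hV
  have hmem : ∀ x, x ∈ V ↔ x < m ∧ x ∉ T := by
    intro x
    rw [hV, Finset.mem_sdiff, Finset.mem_range]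
  have hkm : k < m := Finset.mem_range.1 (hK hkK)
  have hVcard : V.card = m - T.card := by
    rw [hV, Finset.card_sdiff_of_subset (fun x hx => Finset.mem_range.2
      (Finset.mem_range.1 (hK (hT hx)))), Finset.card_range]
  have h4 : 4 ≤ V.card := by omega
  have hm4 : 4 ≤ m := by omega
  have hkV : k ∈ V := (hmem k).2 ⟨hkm, hkT⟩
  have hnotT : ∀ x, x ∉ K → x ∉ T := fun x hx hxT => hx (hT hxT)
  by_cases hk0 : k = 0
  · -- minimum case : ear = (1, m-1)
    subst hk0
    have h1K : (1 : ℕ) ∉ K := by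
      have := hadj 0 hkK
      rwa [Nat.mod_eq_of_lt (by omega)] at this
    have hm1K : m - 1 ∉ K := by
      intro hmK
      have := hadj (m - 1) hmK
      rw [show m - 1 + 1 = m by omega, Nat.mod_self] at this
      exact this hkK
    have hs : (1 : ℕ) ∈ V := (hmem 1).2 ⟨by omega, hnotT 1 h1K⟩
    have hb : m - 1 ∈ V := (hmem (m - 1)).2 ⟨by omega, hnotT _ hm1K⟩
    have hmid : ∃ c ∈ V, 1 < c ∧ c < m - 1 := by
      obtain ⟨c, hcV, hc1, hc2, hc3⟩ := exists_fourth (x := 0) (y := 1) (z := m - 1) h4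
      have := (hmem c).1 hcV
      exact ⟨c, hcV, by omega, by omega⟩
    have hear : earDiag m 0 = (1, m - 1) := by rw [earDiag, if_pos rfl]
    rw [hear]
    exact ear_facts_min hkV hs hb (by omega) (fun x _ => Nat.zero_le x)
      (fun x hx => by have := (hmem x).1 hx; omega)
      (fun x hx h => by omega) hmid
  · by_cases hkm1 : k = m - 1
    · -- maximum case : ear = (0, m - 2)
      have h0K : (0 : ℕ) ∉ K := by
        intro h0
        have := hadj k hkK
        rw [hkm1, show m - 1 + 1 = m by omega, Nat.mod_self] at this
        exact this h0
      have hpK : m - 2 ∉ K := by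
        intro hpK'
        have := hadj (m - 2) hpK'
        rw [Nat.mod_eq_of_lt (by omega)] at this
        rw [show m - 2 + 1 = m - 1 by omega] at this
        exact this (hkm1 ▸ hkK)
      have ha : (0 : ℕ) ∈ V := (hmem 0).2 ⟨by omega, hnotT _ h0K⟩
      have hp : m - 2 ∈ V := (hmem (m - 2)).2 ⟨by omega, hnotT _ hpK⟩
      have hmid : ∃ c ∈ V, 0 < c ∧ c < m - 2 := by
        obtain ⟨c, hcV, hc1, hc2, hc3⟩ := exists_fourth (x := 0) (y := m - 2) (z := m - 1) h4
        have := (hmem c).1 hcV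
        exact ⟨c, hcV, by omega, by omega⟩
      have hear : earDiag m k = (0, m - 2) := by
        rw [earDiag, if_neg hk0, if_pos hkm1]
      rw [hear]
      exact ear_facts_max ha hp hkV (by omega) (fun x _ => Nat.zero_le x)
        (fun x hx => by have := (hmem x).1 hx; omega)
        (fun x hx h => by have := (hmem x).1 hx; omega) hmid
    · -- interior case : ear = (k - 1, k + 1)
      have hpK : k - 1 ∉ K := by
        intro hpK'
        have := hadj (k - 1) hpK'
        rw [Nat.mod_eq_of_lt (by omega), show k - 1 + 1 = k by omega] at this
        exact this hkK
      have hsK : k + 1 ∉ K := by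
        have := hadj k hkK
        rwa [Nat.mod_eq_of_lt (by omega)] at this
      have hp : k - 1 ∈ V := (hmem (k - 1)).2 ⟨by omega, hnotT _ hpK⟩
      have hs : k + 1 ∈ V := (hmem (k + 1)).2 ⟨by omega, hnotT _ hsK⟩
      have hout : ∃ x ∈ V, x < k - 1 ∨ k + 1 < x := by
        obtain ⟨c, hcV, hc1, hc2, hc3⟩ := exists_fourth (x := k - 1) (y := k) (z := k + 1) h4
        exact ⟨c, hcV, by omega⟩
      have hear : earDiag m k = (k - 1, k + 1) := by
        rw [earDiag, if_neg hk0, if_neg hkm1]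
      rw [hear]
      exact ear_facts_int hp hkV hs (by omega) (by omega)
        (fun x hx h1 h2 => by omega) hout

lemma ear_distinct {m : ℕ} {K : Finset ℕ} (hK : K ⊆ Finset.range m) (hm : 5 ≤ m)
    {j j' : ℕ} (hj : j ∈ K) (hj' : j' ∈ K) (hne : j ≠ j') :
    earDiag m j ≠ earDiag m j' := by
  have h1 : j < m := Finset.mem_range.1 (hK hj)
  have h2 : j' < m := Finset.mem_range.1 (hK hj')
  unfold earDiag
  split_ifs <;> (intro heq; rw [Prod.mk.injEq] at heq; omega)

lemma sdiff_erase_insert {m a : ℕ} {T : Finset ℕ} :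
    (Finset.range m \ T).erase a = Finset.range m \ insert a T := by
  ext x
  simp only [Finset.mem_erase, Finset.mem_sdiff, Finset.mem_range, Finset.mem_insert]
  tauto

lemma card_with_ears {m : ℕ} {K : Finset ℕ} (hK : K ⊆ Finset.range m)
    (hadj : ∀ j ∈ K, (j + 1) % m ∉ K)
    (hdist : ∀ j ∈ K, ∀ j' ∈ K, j ≠ j' → earDiag m j ≠ earDiag m j')
    (hm : 2 * K.card + 2 ≤ m) :
    ∀ S : Finset ℕ, S ⊆ K → ∀ T : Finset ℕ, T ⊆ K → (∀ x ∈ S, x ∉ T) →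
    (@Finset.filter _ (fun D => ∀ kk ∈ S, earDiag m kk ∈ D) (Classical.decPred _)
        (tris (Finset.range m \ T))).card = catalan (m - T.card - S.card - 2) := by
  classical
  intro S
  induction S using Finset.induction_on with
  | empty =>
    intro _ T hT _
    have hTcard : (Finset.range m \ T).card = m - T.card := by
      rw [Finset.card_sdiff_of_subset (fun x hx => hK (hT hx)), Finset.card_range]
    have hfil : (@Finset.filter _
        (fun D => ∀ kk ∈ (∅ : Finset ℕ), earDiag m kk ∈ D) (Classical.decPred _)
        (tris (Finset.range m \ T))) = tris (Finset.range m \ T) := by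
      ext D
      rw [mem_filterC]
      simp
    rw [hfil, tris_card, hTcard]
    congr 1
  | @insert a S₀ hna ih =>
    intro hSK T hT hdisj
    have haK : a ∈ K := hSK (Finset.mem_insert_self a S₀)
    have haT : a ∉ T := hdisj a (Finset.mem_insert_self a S₀)
    have hS₀K : S₀ ⊆ K := fun x hx => hSK (Finset.mem_insert_of_mem hx)
    have hKpos : 0 < K.card := Finset.card_pos.2 ⟨a, haK⟩
    have hTlt : T.card < K.card :=
      Finset.card_lt_card ((Finset.ssubset_iff_of_subset hT).2 ⟨a, haK, haT⟩)
    have hm4 : 4 ≤ m - T.card := by omega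
    obtain ⟨H1, H2, H3, H4⟩ := ear_facts_range hK hadj hT haK haT hm4
    have HF : ∀ f ∈ S₀.image (earDiag m), f ≠ earDiag m a := by
      intro f hf
      obtain ⟨kk, hkk, rfl⟩ := Finset.mem_image.1 hf
      exact hdist kk (hS₀K hkk) a haK (fun h => hna (h ▸ hkk))
    have hpeel := card_ear_peel (F := S₀.image (earDiag m)) H1 H2 H3 H4 HF
    have e1 : (@Finset.filter _
        (fun D => ∀ kk ∈ insert a S₀, earDiag m kk ∈ D) (Classical.decPred _)
        (tris (Finset.range m \ T)))
        = (@Finset.filter _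
          (fun D => earDiag m a ∈ D ∧ ∀ f ∈ S₀.image (earDiag m), f ∈ D)
          (Classical.decPred _) (tris (Finset.range m \ T))) := by
      ext D
      rw [mem_filterC, mem_filterC]
      constructor
      · rintro ⟨hD, h⟩
        refine ⟨hD, h a (Finset.mem_insert_self a S₀), ?_⟩
        intro f hf
        obtain ⟨kk, hkk, rfl⟩ := Finset.mem_image.1 hf
        exact h kk (Finset.mem_insert_of_mem hkk)
      · rintro ⟨hD, he, h⟩
        refine ⟨hD, ?_⟩
        intro kk hkk
        rcases Finset.mem_insert.1 hkk with rfl | hkk'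
        · exact he
        · exact h _ (Finset.mem_image_of_mem _ hkk')
    have e2 : (@Finset.filter _
        (fun D => ∀ f ∈ S₀.image (earDiag m), f ∈ D) (Classical.decPred _)
        (tris ((Finset.range m \ T).erase a)))
        = (@Finset.filter _
          (fun D => ∀ kk ∈ S₀, earDiag m kk ∈ D) (Classical.decPred _)
          (tris (Finset.range m \ insert a T))) := by
      rw [sdiff_erase_insert]
      ext D
      rw [mem_filterC, mem_filterC]
      constructor
      · rintro ⟨hD, h⟩
        exact ⟨hD, fun kk hkk => h _ (Finset.mem_image_of_mem _ hkk)⟩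
      · rintro ⟨hD, h⟩
        refine ⟨hD, ?_⟩
        intro f hf
        obtain ⟨kk, hkk, rfl⟩ := Finset.mem_image.1 hf
        exact h kk hkk
    rw [e1, hpeel, e2, ih hS₀K (insert a T)
      (Finset.insert_subset haK hT)
      (fun x hx hxT => by
        rcases Finset.mem_insert.1 hxT with rfl | hxT'
        · exact hna hx
        · exact hdisj x (Finset.mem_insert_of_mem hx) hxT'),
      Finset.card_insert_of_notMem haT, Finset.card_insert_of_notMem hna]
    congr 1
    omega

lemma filter_inst_eq {α : Type*} {p : α → Prop} (i1 i2 : DecidablePred p) (s : Finset α) :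
    @Finset.filter α p i1 s = @Finset.filter α p i2 s := by
  have : i1 = i2 := funext fun a => Subsingleton.elim (i1 a) (i2 a)
  rw [this]

lemma isdiag_iff {m : ℕ} (hm : 2 ≤ m) (d : ℕ × ℕ) :
    IsDiag m d ↔ GDiag (Finset.range m) d := by
  constructor
  · rintro ⟨h1, h2, h3⟩
    refine ⟨Finset.mem_range.2 (by omega), Finset.mem_range.2 h2,
      ⟨d.1 + 1, Finset.mem_range.2 (by omega), by omega, by omega⟩, ?_⟩
    by_cases h0 : d.1 = 0
    · have hd2 : d.2 ≠ m - 1 := fun hh => h3 ⟨h0, hh⟩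
      exact ⟨m - 1, Finset.mem_range.2 (by omega), Or.inr (by omega)⟩
    · exact ⟨0, Finset.mem_range.2 (by omega), Or.inl (by omega)⟩
  · rintro ⟨h1, h2, ⟨c, hc, hc1, hc2⟩, ⟨x, hx, hxlt⟩⟩
    rw [Finset.mem_range] at h1 h2 hc hx
    refine ⟨by omega, h2, ?_⟩
    rintro ⟨hd1, hd2⟩
    omega

lemma gtri_iff {m : ℕ} (hm : 2 ≤ m) (D : Finset (ℕ × ℕ)) :
    IsPolygonTriangulation m D ↔ GTri (Finset.range m) D := by
  constructor
  · rintro ⟨hd, hnc, hmax⟩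
    exact ⟨fun d hdD => (isdiag_iff hm d).mp (hd d hdD), hnc,
      fun d hgd => hmax d ((isdiag_iff hm d).mpr hgd)⟩
  · rintro ⟨hd, hnc, hmax⟩
    exact ⟨fun d hdD => (isdiag_iff hm d).mpr (hd d hdD), hnc,
      fun d hid => hmax d ((isdiag_iff hm d).mp hid)⟩

end Stmt18


/-- Let `K` be a set of `r ≤ n/2` pairwise non-adjacent
vertices of a convex polygon with `n + 2` vertices, and forbid, for each
`k ∈ K`, the ear diagonal joining the two neighbours of `k`.  The number of
triangulations of the polygon avoiding all `r` forbidden diagonals is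
`C_n^{(r)} = Σ_{i=0}^{r} (−1)^i · binomial(r, i) · C_{n−i}`. -/
theorem stmt18 (n r : ℕ) (hr : 2 * r ≤ n) (K : Finset ℕ)
    (hK : K ⊆ Finset.range (n + 2)) (hcard : K.card = r)
    (hadj : ∀ j ∈ K, (j + 1) % (n + 2) ∉ K) :
    (Nat.card {D : Finset (ℕ × ℕ) // IsPolygonTriangulation (n + 2) D ∧
        ∀ k ∈ K, earDiag (n + 2) k ∉ D} : ℤ) =
      ∑ i ∈ Finset.range (r + 1),
        (-1 : ℤ) ^ i * (r.choose i : ℤ) * (catalan (n - i) : ℤ) := by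
  classical
  have hm2 : 2 ≤ n + 2 := by omega
  set A := @Finset.filter _ (fun D => ∀ k ∈ K, earDiag (n + 2) k ∉ D)
    (Classical.decPred _) (Stmt18.tris (Finset.range (n + 2))) with hA
  have hcardA : Nat.card {D : Finset (ℕ × ℕ) // IsPolygonTriangulation (n + 2) D ∧
      ∀ k ∈ K, earDiag (n + 2) k ∉ D} = A.card := by
    rw [← Nat.card_eq_finsetCard A]
    apply Nat.card_congr
    apply Equiv.subtypeEquivRight
    intro D
    rw [hA, Stmt18.mem_filterC, Stmt18.mem_tris]
    exact and_congr_left' (Stmt18.gtri_iff hm2 D)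
  -- the count of triangulations containing all ears of a subset S
  have hN : ∀ S ∈ K.powerset,
      ((@Finset.filter _ (fun D => ∀ kk ∈ S, earDiag (n + 2) kk ∈ D)
        (Classical.decPred _) (Stmt18.tris (Finset.range (n + 2)))).card : ℤ)
        = (catalan (n - S.card) : ℤ) := by
    intro S hS
    have hSK := Finset.mem_powerset.1 hS
    have hdist : ∀ j ∈ K, ∀ j' ∈ K, j ≠ j' →
        earDiag (n + 2) j ≠ earDiag (n + 2) j' := by
      intro j hj j' hj' hne
      by_cases h5 : 5 ≤ n + 2
      · exact Stmt18.ear_distinct hK h5 hj hj' hne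
      · exact absurd (Finset.card_le_one.1 (by omega) j hj j' hj') hne
    have hw := Stmt18.card_with_ears hK hadj hdist (by omega) S hSK ∅
      (Finset.empty_subset K) (fun x _ => Finset.notMem_empty x)
    rw [Finset.sdiff_empty, Finset.card_empty] at hw
    rw [hw]
    have hScard : S.card ≤ r := hcard ▸ Finset.card_le_card hSK
    congr 2
    omega
  -- inclusion–exclusion
  have h2 : ∀ D : Finset (ℕ × ℕ), (if (∀ k ∈ K, earDiag (n + 2) k ∉ D)
      then (1 : ℤ) else 0)
      = ∏ k ∈ K, ((if earDiag (n + 2) k ∈ D then (-1 : ℤ) else 0) + 1) := by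
    intro D
    by_cases h : ∀ k ∈ K, earDiag (n + 2) k ∉ D
    · rw [if_pos h, Finset.prod_eq_one]
      intro k hk
      rw [if_neg (h k hk), zero_add]
    · rw [if_neg h]
      push_neg at h
      obtain ⟨k, hk, hke⟩ := h
      refine (Finset.prod_eq_zero hk ?_).symm
      rw [if_pos hke]
      norm_num
  have h3 : ∀ (D : Finset (ℕ × ℕ)) (t : Finset ℕ),
      (∏ k ∈ t, (if earDiag (n + 2) k ∈ D then (-1 : ℤ) else 0))
      = (-1 : ℤ) ^ t.card * (if ∀ k ∈ t, earDiag (n + 2) k ∈ D then (1 : ℤ) else 0) := by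
    intro D t
    by_cases h : ∀ k ∈ t, earDiag (n + 2) k ∈ D
    · rw [if_pos h, mul_one,
        Finset.prod_congr rfl (fun k hk => if_pos (h k hk)), Finset.prod_const]
    · rw [if_neg h, mul_zero]
      push_neg at h
      obtain ⟨k, hk, hke⟩ := h
      exact Finset.prod_eq_zero hk (if_neg hke)
  have h1 : (A.card : ℤ) = ∑ D ∈ Stmt18.tris (Finset.range (n + 2)),
      (if ∀ k ∈ K, earDiag (n + 2) k ∉ D then (1 : ℤ) else 0) := by
    rw [Finset.sum_boole, hA,
      Stmt18.filter_inst_eq (Classical.decPred _) _ (Stmt18.tris (Finset.range (n + 2)))]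
  have hIE : (A.card : ℤ) = ∑ t ∈ K.powerset,
      (-1 : ℤ) ^ t.card * (catalan (n - t.card) : ℤ) := by
    rw [h1, Finset.sum_congr rfl (fun D _ => h2 D)]
    have hexp : ∀ D ∈ Stmt18.tris (Finset.range (n + 2)),
        (∏ k ∈ K, ((if earDiag (n + 2) k ∈ D then (-1 : ℤ) else 0) + 1))
        = ∑ t ∈ K.powerset, (-1 : ℤ) ^ t.card
            * (if ∀ k ∈ t, earDiag (n + 2) k ∈ D then (1 : ℤ) else 0) := by
      intro D _
      rw [Finset.prod_add]
      refine Finset.sum_congr rfl (fun t ht => ?_)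
      rw [Finset.prod_const_one, mul_one, h3 D t]
    rw [Finset.sum_congr rfl hexp, Finset.sum_comm]
    refine Finset.sum_congr rfl (fun t ht => ?_)
    rw [← Finset.mul_sum, Finset.sum_boole,
      Stmt18.filter_inst_eq _ (Classical.decPred _) (Stmt18.tris (Finset.range (n + 2))), hN t ht]
  rw [hcardA, hIE, Finset.sum_powerset K
    (fun t => (-1 : ℤ) ^ t.card * (catalan (n - t.card) : ℤ)), hcard]
  refine Finset.sum_congr rfl (fun i hi => ?_)
  rw [Finset.sum_congr rfl (fun t ht => by
    rw [(Finset.mem_powersetCard.1 ht).2]), Finset.sum_const,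
    Finset.card_powersetCard, hcard, nsmul_eq_mul]
  ring
end

section
/- Let R be a rooted tree (rigid core) in which the root has at most 3 children and every other node has at most 2 children, with λ₁, λ₂, λ₃ edges at levels 1, 2, 3 respectively and ν₂ level-1 nodes having two children. The number of subtrees of R containing the root, counted with weight 4 minus the number of edges (for subtrees with at most 3 edges), equals 4 + binomial(λ₁,3) + λ₁² + 2λ₁ + (λ₁+1)λ₂ + λ₃ + ν₂; moreover if R has m edges and no level-4 edges, this quantity contr⁺(R) is at most (13 + 9m)/2. -/
/-- A *rigid core*: a rooted tree of depth at most `3` in which the root has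
at most `3` children (level-1 edges) and every other node has at most `2`
children.  Edges are encoded by the child they lead to: a level-1 edge is an
element of `Fin 3`, a level-2 edge is a level-1 edge together with an element
of `Fin 2`, and similarly for level-3 edges. -/
structure CoreTree where
  L1 : Finset (Fin 3)
  L2 : Finset (Fin 3 × Fin 2)
  L3 : Finset ((Fin 3 × Fin 2) × Fin 2)
  closed2 : ∀ e ∈ L2, e.1 ∈ L1
  closed3 : ∀ e ∈ L3, e.1 ∈ L2

/-- A subtree of `t` containing the root: a downward-closed collection of
edges of `t`. -/
def IsSubtree (t : CoreTree)
    (s : Finset (Fin 3) × Finset (Fin 3 × Fin 2) × Finset ((Fin 3 × Fin 2) × Fin 2)) :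
    Prop :=
  s.1 ⊆ t.L1 ∧ s.2.1 ⊆ t.L2 ∧ s.2.2 ⊆ t.L3 ∧
    (∀ e ∈ s.2.1, e.1 ∈ s.1) ∧ (∀ e ∈ s.2.2, e.1 ∈ s.2.1)

/-- The number of subtrees of `t` containing the root and having exactly `j`
edges. -/
noncomputable def subtreeCount (t : CoreTree) (j : ℕ) : ℕ :=
  Nat.card {s : Finset (Fin 3) × Finset (Fin 3 × Fin 2) ×
      Finset ((Fin 3 × Fin 2) × Fin 2) //
    IsSubtree t s ∧ s.1.card + s.2.1.card + s.2.2.card = j}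

/-- `ν₂ t` is the number of level-1 nodes of `t` having two child-edges. -/
def nu2 (t : CoreTree) : ℕ :=
  (t.L1.filter fun a => (a, 0) ∈ t.L2 ∧ (a, 1) ∈ t.L2).card

set_option maxRecDepth 10000

abbrev TT := Finset (Fin 3) × Finset (Fin 3 × Fin 2) × Finset ((Fin 3 × Fin 2) × Fin 2)

instance instDecIsSubtree (t : CoreTree) : DecidablePred (IsSubtree t) := fun s => by
  unfold IsSubtree; infer_instance

def SS (t : CoreTree) (j : ℕ) : Finset TT :=
  Finset.univ.filter fun s => IsSubtree t s ∧ s.1.card + s.2.1.card + s.2.2.card = j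

lemma subtreeCount_eq (t : CoreTree) (j : ℕ) : subtreeCount t j = (SS t j).card := by
  rw [subtreeCount, Nat.card_eq_fintype_card, SS, Fintype.card_subtype]

lemma mem_SS {t : CoreTree} {j : ℕ} {s : TT} :
    s ∈ SS t j ↔ IsSubtree t s ∧ s.1.card + s.2.1.card + s.2.2.card = j := by
  simp [SS]

lemma c0 (t : CoreTree) : (SS t 0).card = 1 := by
  have : SS t 0 = {((∅ : Finset (Fin 3)), (∅ : Finset (Fin 3 × Fin 2)),
      (∅ : Finset ((Fin 3 × Fin 2) × Fin 2)))} := by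
    ext s
    simp only [mem_SS, Finset.mem_singleton, IsSubtree]
    constructor
    · rintro ⟨-, h⟩
      have h1 : s.1 = ∅ := Finset.card_eq_zero.1 (by omega)
      have h2 : s.2.1 = ∅ := Finset.card_eq_zero.1 (by omega)
      have h3 : s.2.2 = ∅ := Finset.card_eq_zero.1 (by omega)
      exact Prod.ext h1 (Prod.ext h2 h3)
    · rintro rfl; simp
  rw [this, Finset.card_singleton]

lemma c1 (t : CoreTree) : (SS t 1).card = t.L1.card := by
  symm
  apply Finset.card_bij (fun a _ => (({a} : Finset (Fin 3)), ∅, ∅))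
  · intro a ha
    simp only [mem_SS, IsSubtree]
    refine ⟨⟨by simpa using ha, by simp, by simp, by simp, by simp⟩, by simp⟩
  · intro a ha b hb h
    simpa using congrArg (fun s : TT => a ∈ s.1) h
  · intro s hs
    rw [mem_SS] at hs
    obtain ⟨⟨h1, h2, h3, h4, h5⟩, hc⟩ := hs
    have e2 : s.2.1 = ∅ := by
      by_contra h
      obtain ⟨e, he⟩ := Finset.nonempty_iff_ne_empty.2 h
      have := Finset.card_pos.2 ⟨_, h4 e he⟩
      have := Finset.card_pos.2 ⟨_, he⟩
      omega
    have e3 : s.2.2 = ∅ :=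
      Finset.eq_empty_of_forall_notMem fun e he => by simpa [e2] using h5 e he
    rw [e2, e3] at hc
    simp at hc
    obtain ⟨a, ha⟩ := Finset.card_eq_one.1 hc
    exact ⟨a, h1 (ha ▸ Finset.mem_singleton_self a), Prod.ext ha.symm (Prod.ext e2.symm e3.symm)⟩

lemma c2 (t : CoreTree) : (SS t 2).card = t.L1.card.choose 2 + t.L2.card := by
  have h := Finset.card_disjSum (t.L1.powersetCard 2) t.L2
  rw [Finset.card_powersetCard] at h
  rw [← h]
  symm
  apply Finset.card_bij (fun x _ => Sum.elim
    (fun P => ((P : Finset (Fin 3)), (∅ : Finset (Fin 3 × Fin 2)),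
      (∅ : Finset ((Fin 3 × Fin 2) × Fin 2))))
    (fun e => (({e.1} : Finset (Fin 3)), ({e} : Finset (Fin 3 × Fin 2)),
      (∅ : Finset ((Fin 3 × Fin 2) × Fin 2)))) x)
  · rintro (P | e) hx
    · simp only [Finset.inl_mem_disjSum, Finset.mem_powersetCard] at hx
      simp only [Sum.elim_inl, mem_SS, IsSubtree]
      exact ⟨⟨hx.1, by simp, by simp, by simp, by simp⟩, by simp [hx.2]⟩
    · simp only [Finset.inr_mem_disjSum] at hx
      simp only [Sum.elim_inr, mem_SS, IsSubtree]
      refine ⟨⟨by simpa using t.closed2 e hx, by simpa using hx, by simp, by simp, by simp⟩, by simp⟩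
  · rintro (P | e) hx (Q | f) hy h <;> simp only [Sum.elim_inl, Sum.elim_inr, Prod.mk.injEq] at h
    · simp [h.1]
    · exact absurd h.2.1.symm (by simp)
    · exact absurd h.2.1 (by simp)
    · exact congrArg Sum.inr (Finset.singleton_inj.mp h.2.1)
  · intro s hs
    rw [mem_SS] at hs
    obtain ⟨⟨h1, h2, h3, h4, h5⟩, hc⟩ := hs
    have e3 : s.2.2 = ∅ := by
      by_contra h
      obtain ⟨f, hf⟩ := Finset.nonempty_iff_ne_empty.2 h
      have m2 := h5 f hf
      have m1 := h4 _ m2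
      have := Finset.card_pos.2 ⟨_, m1⟩
      have := Finset.card_pos.2 ⟨_, m2⟩
      have := Finset.card_pos.2 ⟨_, hf⟩
      omega
    rcases Finset.eq_empty_or_nonempty s.2.1 with e2 | ⟨e, he⟩
    · rw [e2, e3] at hc; simp at hc
      refine ⟨Sum.inl s.1, ?_, ?_⟩
      · simp [Finset.mem_powersetCard, h1, hc]
      · simp only [Sum.elim_inl]
        rw [← e2, ← e3]
    · have m1 := h4 e he
      have hc1 := Finset.card_pos.2 ⟨_, m1⟩
      have hc2 := Finset.card_pos.2 ⟨_, he⟩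
      rw [e3] at hc; simp at hc
      have k1 : s.1.card = 1 := by omega
      have k2 : s.2.1.card = 1 := by omega
      have s1 : s.1 = {e.1} := by
        obtain ⟨a, ha⟩ := Finset.card_eq_one.1 k1
        rw [ha] at m1 ⊢
        simp at m1; simp [m1]
      have s2 : s.2.1 = {e} := by
        obtain ⟨f, hf⟩ := Finset.card_eq_one.1 k2
        rw [hf] at he ⊢
        simp at he; simp [he]
      refine ⟨Sum.inr e, by simpa using h2 he, ?_⟩
      simp only [Sum.elim_inr]
      rw [← s1, ← s2, ← e3]

lemma eq_singleton_of_card_one {α : Type*} {s : Finset α} {a : α}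
    (h : s.card = 1) (ha : a ∈ s) : s = {a} := by
  obtain ⟨b, rfl⟩ := Finset.card_eq_one.1 h
  simp only [Finset.mem_singleton] at ha
  rw [ha]

lemma sigma_card (t : CoreTree) :
    (t.L2.sigma fun e => t.L1.erase e.1).card = t.L2.card * (t.L1.card - 1) := by
  rw [Finset.card_sigma]
  rw [Finset.sum_congr rfl fun e he => Finset.card_erase_of_mem (t.closed2 e he)]
  rw [Finset.sum_const, smul_eq_mul]

lemma c3 (t : CoreTree) :
    (SS t 3).card = t.L1.card.choose 3 + t.L2.card * (t.L1.card - 1) + nu2 t + t.L3.card := by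
  have hcard : (((t.L1.powersetCard 3).disjSum (t.L2.sigma fun e => t.L1.erase e.1)).disjSum
      ((t.L1.filter fun a => (a, 0) ∈ t.L2 ∧ (a, 1) ∈ t.L2).disjSum t.L3)).card =
      t.L1.card.choose 3 + t.L2.card * (t.L1.card - 1) + nu2 t + t.L3.card := by
    rw [Finset.card_disjSum, Finset.card_disjSum, Finset.card_disjSum,
      Finset.card_powersetCard, sigma_card, nu2]
    ring
  rw [← hcard]
  symm
  apply Finset.card_bij (fun x _ => Sum.elim
    (Sum.elim (fun P => ((P : Finset (Fin 3)), (∅ : Finset (Fin 3 × Fin 2)),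
        (∅ : Finset ((Fin 3 × Fin 2) × Fin 2))))
      (fun p => ((insert p.1.1 {p.2} : Finset (Fin 3)), ({p.1} : Finset (Fin 3 × Fin 2)),
        (∅ : Finset ((Fin 3 × Fin 2) × Fin 2)))))
    (Sum.elim (fun a => (({a} : Finset (Fin 3)),
        ({(a, 0), (a, 1)} : Finset (Fin 3 × Fin 2)),
        (∅ : Finset ((Fin 3 × Fin 2) × Fin 2))))
      (fun f => (({f.1.1} : Finset (Fin 3)), ({f.1} : Finset (Fin 3 × Fin 2)),
        ({f} : Finset ((Fin 3 × Fin 2) × Fin 2))))) x)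
  · rintro ((P | ⟨e, a⟩) | (a | f)) hx
    · simp only [Finset.inl_mem_disjSum, Finset.mem_powersetCard] at hx
      simp only [Sum.elim_inl, mem_SS, IsSubtree]
      exact ⟨⟨hx.1, by simp, by simp, by simp, by simp⟩, by simp [hx.2]⟩
    · simp only [Finset.inl_mem_disjSum, Finset.inr_mem_disjSum, Finset.mem_sigma,
        Finset.mem_erase] at hx
      obtain ⟨he, hane, haL1⟩ := hx
      simp only [Sum.elim_inl, Sum.elim_inr, mem_SS, IsSubtree]
      constructor
      · refine ⟨?_, by simpa using he, by simp, by simp, by simp⟩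
        intro x hx
        simp only [Finset.mem_insert, Finset.mem_singleton] at hx
        rcases hx with rfl | rfl
        · exact t.closed2 e he
        · exact haL1
      · have : (insert e.1 ({a} : Finset (Fin 3))).card = 2 := by
          rw [Finset.card_insert_of_notMem (by simpa using hane.symm)]
          simp
        simp [this]
    · simp only [Finset.inr_mem_disjSum, Finset.inl_mem_disjSum, Finset.mem_filter] at hx
      obtain ⟨haL1, h0, h1⟩ := hx
      simp only [Sum.elim_inr, Sum.elim_inl, mem_SS, IsSubtree]
      constructor
      · refine ⟨by simpa using haL1, ?_, by simp, ?_, by simp⟩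
        · intro x hx
          simp only [Finset.mem_insert, Finset.mem_singleton] at hx
          rcases hx with rfl | rfl
          · exact h0
          · exact h1
        · intro x hx
          simp only [Finset.mem_insert, Finset.mem_singleton] at hx
          rcases hx with rfl | rfl <;> simp
      · have h2 : ({(a, 0), (a, 1)} : Finset (Fin 3 × Fin 2)).card = 2 := by
          rw [Finset.card_insert_of_notMem (by simp [Prod.ext_iff, Fin.ext_iff])]
          simp
        simp [h2]
    · simp only [Finset.inr_mem_disjSum] at hx
      simp only [Sum.elim_inr, mem_SS, IsSubtree]
      refine ⟨⟨by simpa using t.closed2 _ (t.closed3 f hx), by simpa using t.closed3 f hx,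
        by simpa using hx, by simp, by simp⟩, by simp⟩
  · rintro ((P | ⟨e, a⟩) | (a | f)) hx ((Q | ⟨e', a'⟩) | (a' | f')) hy h <;>
      simp only [Sum.elim_inl, Sum.elim_inr, Prod.mk.injEq] at h
    · rw [h.1]
    · exact absurd h.2.1.symm (Finset.singleton_ne_empty _)
    · exact absurd h.2.1.symm (Finset.insert_ne_empty _ _)
    · exact absurd h.2.2.symm (Finset.singleton_ne_empty _)
    · exact absurd h.2.1 (Finset.singleton_ne_empty _)
    · -- two (edge, extra) pairs
      have he : e = e' := Finset.singleton_inj.mp h.2.1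
      subst he
      have ha : a = a' := by
        simp only [Finset.inl_mem_disjSum, Finset.inr_mem_disjSum, Finset.mem_sigma,
          Finset.mem_erase] at hx hy
        have := h.1
        have hmem : a ∈ insert e.1 ({a'} : Finset (Fin 3)) := by
          rw [← this]; simp
        simp only [Finset.mem_insert, Finset.mem_singleton] at hmem
        rcases hmem with h' | h'
        · exact absurd h' hx.2.1
        · exact h'
      rw [ha]
    · -- pair vs filter node
      have hh := congrArg Finset.card h.2.1
      rw [Finset.card_singleton,
        Finset.card_insert_of_notMem (by simp [Prod.ext_iff, Fin.ext_iff]),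
        Finset.card_singleton] at hh
      exact absurd hh (by norm_num)
    · exact absurd h.2.2.symm (Finset.singleton_ne_empty _)
    · exact absurd h.2.1 (Finset.insert_ne_empty _ _)
    · have hh := congrArg Finset.card h.2.1
      rw [Finset.card_insert_of_notMem (by simp [Prod.ext_iff, Fin.ext_iff]),
        Finset.card_singleton, Finset.card_singleton] at hh
      exact absurd hh (by norm_num)
    · rw [Finset.singleton_inj.mp h.1]
    · exact absurd h.2.2.symm (Finset.singleton_ne_empty _)
    · exact absurd h.2.2 (Finset.singleton_ne_empty _)
    · exact absurd h.2.2 (Finset.singleton_ne_empty _)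
    · exact absurd h.2.2 (Finset.singleton_ne_empty _)
    · rw [Finset.singleton_inj.mp h.2.2]
  · intro s hs
    rw [mem_SS] at hs
    obtain ⟨⟨h1, h2, h3, h4, h5⟩, hc⟩ := hs
    rcases Finset.eq_empty_or_nonempty s.2.2 with e3 | ⟨f, hf⟩
    · rcases Finset.eq_empty_or_nonempty s.2.1 with e2 | ⟨e, he⟩
      · rw [e2, e3] at hc; simp at hc
        refine ⟨Sum.inl (Sum.inl s.1), ?_, ?_⟩
        · simp [Finset.mem_powersetCard, h1, hc]
        · simp only [Sum.elim_inl]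
          rw [← e2, ← e3]
      · have m1 := h4 e he
        have hp1 := Finset.card_pos.2 ⟨_, m1⟩
        have hp2 := Finset.card_pos.2 ⟨_, he⟩
        rw [e3] at hc; simp at hc
        have hle : s.2.1.card ≤ 2 := by omega
        rcases Nat.lt_or_ge s.2.1.card 2 with hk | hk
        · -- s.2.1.card = 1, s.1.card = 2
          have k2 : s.2.1.card = 1 := by omega
          have k1 : s.1.card = 2 := by omega
          have hs2 : s.2.1 = {e} := eq_singleton_of_card_one k2 he
          have hek : (s.1.erase e.1).card = 1 := by
            rw [Finset.card_erase_of_mem m1, k1]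
          obtain ⟨a, hae⟩ := Finset.card_eq_one.1 hek
          have haerase : a ∈ s.1.erase e.1 := by rw [hae]; simp
          have hane : a ≠ e.1 := (Finset.mem_erase.1 haerase).1
          have haS : a ∈ s.1 := (Finset.mem_erase.1 haerase).2
          have hs1 : s.1 = insert e.1 ({a} : Finset (Fin 3)) := by
            rw [← hae, Finset.insert_erase m1]
          refine ⟨Sum.inl (Sum.inr ⟨e, a⟩), ?_, ?_⟩
          · simp only [Finset.inl_mem_disjSum, Finset.inr_mem_disjSum, Finset.mem_sigma,
              Finset.mem_erase]
            exact ⟨h2 he, hane, h1 haS⟩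
          · simp only [Sum.elim_inl, Sum.elim_inr]
            rw [← hs1, ← hs2, ← e3]
        · -- s.2.1.card = 2, s.1.card = 1
          have k2 : s.2.1.card = 2 := by omega
          have k1 : s.1.card = 1 := by omega
          have hs1 : s.1 = {e.1} := eq_singleton_of_card_one k1 m1
          obtain ⟨x, y, hxy, hpair⟩ := Finset.card_eq_two.1 k2
          have hxm : x ∈ s.2.1 := by rw [hpair]; simp
          have hym : y ∈ s.2.1 := by rw [hpair]; simp
          have hx1 : x.1 = e.1 := by
            have := h4 x hxm; rw [hs1] at this; simpa using this
          have hy1 : y.1 = e.1 := by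
            have := h4 y hym; rw [hs1] at this; simpa using this
          have hxy2 : x.2 ≠ y.2 := by
            intro hh
            exact hxy (Prod.ext (hx1.trans hy1.symm) hh)
          have hpair' : s.2.1 = {(e.1, 0), (e.1, 1)} := by
            rw [hpair]
            have hx' : x = (e.1, x.2) := Prod.ext hx1 rfl
            have hy' : y = (e.1, y.2) := Prod.ext hy1 rfl
            rw [hx', hy']
            rcases (by omega : x.2 = 0 ∧ y.2 = 1 ∨ x.2 = 1 ∧ y.2 = 0) with ⟨hx2, hy2⟩ | ⟨hx2, hy2⟩
            · rw [hx2, hy2]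
            · rw [hx2, hy2, Finset.pair_comm]
          refine ⟨Sum.inr (Sum.inl e.1), ?_, ?_⟩
          · simp only [Finset.inr_mem_disjSum, Finset.inl_mem_disjSum, Finset.mem_filter]
            refine ⟨h1 m1, h2 ?_, h2 ?_⟩ <;> rw [hpair'] <;> simp
          · simp only [Sum.elim_inr, Sum.elim_inl]
            rw [← hs1, ← hpair', ← e3]
    · have m2 := h5 f hf
      have m1 := h4 _ m2
      have hp1 := Finset.card_pos.2 ⟨_, m1⟩
      have hp2 := Finset.card_pos.2 ⟨_, m2⟩
      have hp3 := Finset.card_pos.2 ⟨_, hf⟩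
      have k1 : s.1.card = 1 := by omega
      have k2 : s.2.1.card = 1 := by omega
      have k3 : s.2.2.card = 1 := by omega
      have hs1 : s.1 = {f.1.1} := eq_singleton_of_card_one k1 m1
      have hs2 : s.2.1 = {f.1} := eq_singleton_of_card_one k2 m2
      have hs3 : s.2.2 = {f} := eq_singleton_of_card_one k3 hf
      refine ⟨Sum.inr (Sum.inr f), by simpa using h3 hf, ?_⟩
      simp only [Sum.elim_inr]
      rw [← hs1, ← hs2, ← hs3]

lemma hl1 (t : CoreTree) : t.L1.card ≤ 3 :=
  le_trans (Finset.card_le_univ _) (by simp)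

lemma hl2 (t : CoreTree) : t.L2.card ≤ 2 * t.L1.card := by
  have hsub : t.L2 ⊆ t.L1 ×ˢ (Finset.univ : Finset (Fin 2)) := by
    intro e he
    simp only [Finset.mem_product, Finset.mem_univ, and_true]
    exact t.closed2 e he
  calc t.L2.card ≤ (t.L1 ×ˢ (Finset.univ : Finset (Fin 2))).card := Finset.card_le_card hsub
    _ = t.L1.card * 2 := by rw [Finset.card_product]; simp
    _ = 2 * t.L1.card := by ring

lemma hnu (t : CoreTree) : 2 * nu2 t ≤ t.L2.card := by
  have hsub : (t.L1.filter fun a => (a, 0) ∈ t.L2 ∧ (a, 1) ∈ t.L2) ×ˢ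
      (Finset.univ : Finset (Fin 2)) ⊆ t.L2 := by
    intro p hp
    obtain ⟨a, i⟩ := p
    simp only [Finset.mem_product, Finset.mem_filter, Finset.mem_univ, and_true] at hp
    fin_cases i
    · exact hp.2.1
    · exact hp.2.2
  have := Finset.card_le_card hsub
  rw [Finset.card_product] at this
  simpa [nu2, Nat.mul_comm] using this

lemma arith (l1 l2 l3 n : ℕ) (h1 : l1 ≤ 3) (h2 : l2 ≤ 2 * l1) (hn : 2 * n ≤ l2) :
    (4 * 1 + 3 * l1 + 2 * (l1.choose 2 + l2) + 1 * (l1.choose 3 + l2 * (l1 - 1) + n + l3) =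
      4 + l1.choose 3 + l1 ^ 2 + 2 * l1 + (l1 + 1) * l2 + l3 + n) ∧
    2 * (4 + l1.choose 3 + l1 ^ 2 + 2 * l1 + (l1 + 1) * l2 + l3 + n) ≤
      13 + 9 * (l1 + l2 + l3) := by
  interval_cases l1 <;> simp [Nat.choose] <;> omega

/-- For a rigid core `R` with `λ₁, λ₂, λ₃` edges at levels
`1, 2, 3` and `ν₂` level-1 nodes with two children: the number of subtrees of
`R` containing the root, counted with weight `4` minus the number of edges
(i.e. `Σ_{j=0}^{3} (4−j) · #(j-edge subtrees)`), equals
`4 + binom(λ₁,3) + λ₁² + 2λ₁ + (λ₁+1)λ₂ + λ₃ + ν₂`; moreover, if `R` has `m`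
edges (and no level-4 edges), this quantity `contr⁺(R)` is at most
`(13 + 9m)/2`. -/
theorem stmt19 (t : CoreTree) :
    (∑ j ∈ Finset.range 4, (4 - j) * subtreeCount t j =
      4 + (t.L1.card.choose 3) + t.L1.card ^ 2 + 2 * t.L1.card +
        (t.L1.card + 1) * t.L2.card + t.L3.card + nu2 t) ∧
    2 * (4 + (t.L1.card.choose 3) + t.L1.card ^ 2 + 2 * t.L1.card +
        (t.L1.card + 1) * t.L2.card + t.L3.card + nu2 t) ≤
      13 + 9 * (t.L1.card + t.L2.card + t.L3.card) := by
  have hsum : ∑ j ∈ Finset.range 4, (4 - j) * subtreeCount t j =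
      4 * 1 + 3 * t.L1.card + 2 * (t.L1.card.choose 2 + t.L2.card) +
        1 * (t.L1.card.choose 3 + t.L2.card * (t.L1.card - 1) + nu2 t + t.L3.card) := by
    rw [Finset.sum_range_succ, Finset.sum_range_succ, Finset.sum_range_succ,
      Finset.sum_range_succ, Finset.sum_range_zero,
      subtreeCount_eq, subtreeCount_eq, subtreeCount_eq, subtreeCount_eq, c0, c1, c2, c3]
  obtain ⟨ha, hb⟩ := arith t.L1.card t.L2.card t.L3.card (nu2 t) (hl1 t) (hl2 t) (hnu t)
  exact ⟨hsum.trans ha, hb⟩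
end
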